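/- arXiv:2204.01793 — 5 statements merged into one kernel-verified Lean document; each statement's English description precedes it below -/
import Mathlib

section
/- Let G = (V, E) be a finite undirected graph, e ∈ E an edge, and G' = (V, E \ {e}). For all λ ≥ 0 and β ∈ [0,1], the partition functions satisfy 0 ≤ Z_{G'}(λ, β) − Z_G(λ, β) ≤ λ² · Z_G(λ, β). In particular, |Z_{G'}(λ, β) − Z_G(λ, β)| ≤ λ² · min{Z_G(λ, β), Z_{G'}(λ, β)}. -/
open Classical in
/-- Partition function of the antiferromagnetic two-state spin system with `β₀ = 1`. -/
noncomputable def Zspin {V : Type*} [Fintype V] [DecidableEq V]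
    (E : Finset (Sym2 V)) (lam beta : ℝ) : ℝ :=
  ∑ σ : V → Bool,
    lam ^ (Finset.univ.filter fun v => σ v = true).card *
    beta ^ (E.filter fun e => ∀ v ∈ e, σ v = true).card

private lemma Zspin_card_filter_erase {V : Type*} [DecidableEq V]
    (E : Finset (Sym2 V)) (e : Sym2 V) (he : e ∈ E)
    (P : Sym2 V → Prop) [DecidablePred P] :
    (E.filter P).card = ((E.erase e).filter P).card + (if P e then 1 else 0) := by
  conv_lhs => rw [← Finset.insert_erase he]
  rw [Finset.filter_insert]
  split
  · rw [Finset.card_insert_of_notMem (by simp)]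
  · simp

/-- Removing a single edge `e` from a loopless graph does not decrease the partition
function, and increases it by at most a factor `1 + λ²`. -/
theorem Zspin_remove_edge {V : Type*} [Fintype V] [DecidableEq V]
    (E : Finset (Sym2 V)) (hE : ∀ e ∈ E, ¬ e.IsDiag)
    (e : Sym2 V) (he : e ∈ E)
    (lam beta : ℝ) (hlam : 0 ≤ lam) (hbeta0 : 0 ≤ beta) (hbeta1 : beta ≤ 1) :
    (0 ≤ Zspin (E.erase e) lam beta - Zspin E lam beta ∧
      Zspin (E.erase e) lam beta - Zspin E lam beta ≤ lam ^ 2 * Zspin E lam beta) ∧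
    |Zspin (E.erase e) lam beta - Zspin E lam beta|
      ≤ lam ^ 2 * min (Zspin E lam beta) (Zspin (E.erase e) lam beta) := by
  classical
  revert he
  induction e using Sym2.ind with
  | _ u w =>
  intro he
  have hne : u ≠ w := fun h => hE _ he (Sym2.mk_isDiag_iff.mpr h)
  -- the flip map setting both endpoints to false
  set g : (V → Bool) → (V → Bool) := fun σ v => if v = u ∨ v = w then false else σ v
    with hg
  -- abbreviations
  set k : (V → Bool) → ℕ := fun σ => (Finset.univ.filter fun v => σ v = true).card with hk
  set c : (V → Bool) → ℕ :=
    fun σ => ((E.erase s(u, w)).filter fun a => ∀ v ∈ a, σ v = true).card with hc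
  set A : Finset (V → Bool) :=
    Finset.univ.filter (fun σ => σ u = true ∧ σ w = true) with hA
  -- edge condition on s(u,w)
  have hPe : ∀ σ : V → Bool, (∀ v ∈ s(u, w), σ v = true) ↔ (σ u = true ∧ σ w = true) := by
    intro σ
    constructor
    · intro h
      exact ⟨h u (by simp), h w (by simp)⟩
    · rintro ⟨h1, h2⟩ v hv
      rcases Sym2.mem_iff.mp hv with rfl | rfl <;> assumption
  have hcard : ∀ σ : V → Bool,
      (E.filter fun a => ∀ v ∈ a, σ v = true).card
        = c σ + (if σ u = true ∧ σ w = true then 1 else 0) := by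
    intro σ
    rw [Zspin_card_filter_erase E s(u, w) he]
    congr 1
    simp [hPe σ]
  -- term nonnegativity
  have hterm_nonneg : ∀ (F : Finset (Sym2 V)) (σ : V → Bool),
      0 ≤ lam ^ k σ * beta ^ (F.filter fun a => ∀ v ∈ a, σ v = true).card :=
    fun F σ => mul_nonneg (pow_nonneg hlam _) (pow_nonneg hbeta0 _)
  -- the difference as a sum over A
  have hD : Zspin (E.erase s(u, w)) lam beta - Zspin E lam beta
      = ∑ σ ∈ A, lam ^ k σ * beta ^ c σ * (1 - beta) := by
    rw [Zspin, Zspin, ← Finset.sum_sub_distrib]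
    rw [Finset.sum_filter]
    apply Finset.sum_congr rfl
    intro σ _
    rw [hcard σ]
    by_cases hσ : σ u = true ∧ σ w = true
    · rw [if_pos hσ, if_pos hσ, pow_succ]
      ring
    · rw [if_neg hσ, if_neg hσ]
      ring
  have hpos : 0 ≤ Zspin (E.erase s(u, w)) lam beta - Zspin E lam beta := by
    rw [hD]
    apply Finset.sum_nonneg
    intro σ _
    exact mul_nonneg (mul_nonneg (pow_nonneg hlam _) (pow_nonneg hbeta0 _))
      (by linarith)
  -- properties of g on A
  have hgu : ∀ σ, g σ u = false := by intro σ; simp [hg]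
  have hgw : ∀ σ, g σ w = false := by intro σ; simp [hg]
  have hkg : ∀ σ ∈ A, k σ = k (g σ) + 2 := by
    intro σ hσ
    simp only [hA, Finset.mem_filter] at hσ
    obtain ⟨-, hσu, hσw⟩ := hσ
    have hset : (Finset.univ.filter fun v => σ v = true)
        = insert u (insert w (Finset.univ.filter fun v => g σ v = true)) := by
      ext v
      simp only [Finset.mem_insert, Finset.mem_filter, Finset.mem_univ, true_and, hg]
      by_cases h1 : v = u
      · subst h1; simp [hσu]
      · by_cases h2 : v = w
        · subst h2; simp [hσw]
        · simp [h1, h2]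
    have hw_not : w ∉ (Finset.univ.filter fun v => g σ v = true) := by
      simp [hgw σ]
    have hu_not : u ∉ insert w (Finset.univ.filter fun v => g σ v = true) := by
      simp [hne, hgu σ]
    rw [hk]
    simp only
    rw [hset, Finset.card_insert_of_notMem hu_not, Finset.card_insert_of_notMem hw_not]
  have hcg : ∀ σ : V → Bool,
      (E.filter fun a => ∀ v ∈ a, g σ v = true).card ≤ c σ := by
    intro σ
    apply Finset.card_le_card
    intro a ha
    simp only [Finset.mem_filter, Finset.mem_erase] at ha ⊢
    obtain ⟨haE, hmono⟩ := ha
    have hane : a ≠ s(u, w) := by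
      intro h
      subst h
      have := hmono u (by simp)
      rw [hgu σ] at this
      exact Bool.false_ne_true this
    refine ⟨⟨hane, haE⟩, ?_⟩
    intro v hv
    have := hmono v hv
    by_cases h1 : v = u ∨ v = w
    · rw [hg] at this; simp only [if_pos h1] at this; exact absurd this Bool.false_ne_true
    · rw [hg] at this; simpa [if_neg h1] using this
  -- injectivity of g on A
  have hginj : ∀ σ ∈ A, ∀ σ' ∈ A, g σ = g σ' → σ = σ' := by
    intro σ hσ σ' hσ' h
    simp only [hA, Finset.mem_filter] at hσ hσ'
    funext v
    by_cases h1 : v = u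
    · subst h1; rw [hσ.2.1, hσ'.2.1]
    · by_cases h2 : v = w
      · subst h2; rw [hσ.2.2, hσ'.2.2]
      · have := congrFun h v
        simpa [hg, h1, h2] using this
  -- the upper bound
  have hupper : Zspin (E.erase s(u, w)) lam beta - Zspin E lam beta
      ≤ lam ^ 2 * Zspin E lam beta := by
    rw [hD]
    have step1 : ∑ σ ∈ A, lam ^ k σ * beta ^ c σ * (1 - beta)
        ≤ ∑ σ ∈ A, lam ^ 2 *
            (lam ^ k (g σ) * beta ^ (E.filter fun a => ∀ v ∈ a, g σ v = true).card) := by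
      apply Finset.sum_le_sum
      intro σ hσ
      have h1 : lam ^ k σ * beta ^ c σ * (1 - beta) ≤ lam ^ k σ * beta ^ c σ := by
        nlinarith [mul_nonneg (pow_nonneg hlam (k σ)) (pow_nonneg hbeta0 (c σ))]
      refine h1.trans ?_
      rw [hkg σ hσ, pow_add, mul_comm (lam ^ k (g σ)) (lam ^ 2), mul_assoc]
      apply mul_le_mul_of_nonneg_left ?_ (pow_nonneg hlam 2)
      exact mul_le_mul_of_nonneg_left
        (pow_le_pow_of_le_one hbeta0 hbeta1 (hcg σ)) (pow_nonneg hlam _)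
    refine step1.trans ?_
    rw [← Finset.mul_sum]
    apply mul_le_mul_of_nonneg_left ?_ (pow_nonneg hlam 2)
    rw [← Finset.sum_image
      (f := fun τ => lam ^ k τ * beta ^ (E.filter fun a => ∀ v ∈ a, τ v = true).card) hginj]
    rw [Zspin]
    apply Finset.sum_le_sum_of_subset_of_nonneg (Finset.subset_univ _)
    intro σ _ _
    exact hterm_nonneg E σ
  have hmin : min (Zspin E lam beta) (Zspin (E.erase s(u, w)) lam beta)
      = Zspin E lam beta := min_eq_left (by linarith)
  refine ⟨⟨hpos, hupper⟩, ?_⟩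
  rw [abs_of_nonneg hpos, hmin]
  exact hupper
end

section
/- Let G ~ D_n(V, φ) be a random graph from the geometric graphon model with edge probability 1 − e^{−φ(x,y)} and uniform vertex locations on V with ν(V) = Vol. Then E[Z_G(λ·Vol/n)] = 1 + Σ_{k=1}^{n} (λ^k/k!) · Π_{i=0}^{k−1}(1 − i/n) · ∫_{V^k} Π_{{i,j}} e^{−φ(x_i,x_j)} dν^k(x), where Z_G denotes the hard-core partition function. -/
open MeasureTheory

/-- In the random-graph model, an outcome `ω` consists of vertex locations `ω.1 : Fin n → X`
and i.i.d. uniform `[0,1]` labels `ω.2` on ordered pairs; vertices `i, j` are adjacent iff the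
label of the ordered pair is at most the edge probability `1 − e^{−φ(x_i, x_j)}`. -/
def edgeOcc {X : Type*} {n : ℕ} (φ : X → X → ℝ)
    (ω : (Fin n → X) × (Fin n × Fin n → ℝ)) (i j : Fin n) : Prop :=
  (i < j ∧ ω.2 (i, j) ≤ 1 - Real.exp (-φ (ω.1 i) (ω.1 j))) ∨
  (j < i ∧ ω.2 (j, i) ≤ 1 - Real.exp (-φ (ω.1 j) (ω.1 i)))

open Classical in
/-- Hard-core partition function of the random graph determined by the outcome `ω`. -/
noncomputable def hcZrand {X : Type*} {n : ℕ} (φ : X → X → ℝ) (z : ℝ)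
    (ω : (Fin n → X) × (Fin n × Fin n → ℝ)) : ℝ :=
  ∑ I : Finset (Fin n),
    if ∀ i ∈ I, ∀ j ∈ I, ¬ edgeOcc φ ω i j then z ^ I.card else 0

/-- canonical pair-interaction kernel -/
noncomputable def Gker {X : Type*} (φ : X → X → ℝ) (k : ℕ) (y : Fin k → X) : ℝ :=
  ∏ q ∈ Finset.univ.filter (fun q : Fin k × Fin k => q.1 < q.2),
    Real.exp (-φ (y q.1) (y q.2))

/-- interaction kernel over pairs from `I` -/
noncomputable def Fker {X : Type*} {n : ℕ} (φ : X → X → ℝ) (I : Finset (Fin n))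
    (x : Fin n → X) : ℝ :=
  ∏ p ∈ Finset.univ.filter (fun p : Fin n × Fin n => p.1 ∈ I ∧ p.2 ∈ I ∧ p.1 < p.2),
    Real.exp (-φ (x p.1) (x p.2))

section Aux

variable {X : Type*} [MeasurableSpace X]

lemma measurable_phi_pair {n : ℕ} (φ : X → X → ℝ) (hφm : Measurable (Function.uncurry φ))
    (i j : Fin n) :
    Measurable fun ω : (Fin n → X) × (Fin n × Fin n → ℝ) => φ (ω.1 i) (ω.1 j) := by
  have hpair : Measurable fun ω : (Fin n → X) × (Fin n × Fin n → ℝ) =>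
      ((ω.1 i, ω.1 j) : X × X) :=
    ((measurable_pi_apply i).comp measurable_fst).prodMk
      ((measurable_pi_apply j).comp measurable_fst)
  exact hφm.comp hpair

lemma measurable_phi_pair' {k : ℕ} (φ : X → X → ℝ) (hφm : Measurable (Function.uncurry φ))
    (i j : Fin k) :
    Measurable fun y : Fin k → X => φ (y i) (y j) := by
  have hpair : Measurable fun y : Fin k → X => ((y i, y j) : X × X) :=
    (measurable_pi_apply i).prodMk (measurable_pi_apply j)
  exact hφm.comp hpair

lemma measurable_Fker {n : ℕ} (φ : X → X → ℝ) (hφm : Measurable (Function.uncurry φ))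
    (I : Finset (Fin n)) : Measurable (Fker φ I) :=
  Finset.measurable_prod _ fun p _ => (measurable_phi_pair' φ hφm p.1 p.2).neg.exp

lemma measurableSet_indepEvent {n : ℕ} (φ : X → X → ℝ)
    (hφm : Measurable (Function.uncurry φ)) (I : Finset (Fin n)) :
    MeasurableSet {ω : (Fin n → X) × (Fin n × Fin n → ℝ) | ∀ i ∈ I, ∀ j ∈ I, ¬ edgeOcc φ ω i j} := by
  have htm : ∀ p : Fin n × Fin n,
      Measurable fun ω : (Fin n → X) × (Fin n × Fin n → ℝ) => ω.2 p :=
    fun p => (measurable_pi_apply p).comp measurable_snd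
  have hxm : ∀ i j : Fin n, Measurable fun ω : (Fin n → X) × (Fin n × Fin n → ℝ) =>
      1 - Real.exp (-φ (ω.1 i) (ω.1 j)) :=
    fun i j => measurable_const.sub (measurable_phi_pair φ hφm i j).neg.exp
  have hedge : ∀ i j : Fin n,
      MeasurableSet {ω : (Fin n → X) × (Fin n × Fin n → ℝ) | edgeOcc φ ω i j} := by
    intro i j
    have hs : {ω : (Fin n → X) × (Fin n × Fin n → ℝ) | edgeOcc φ ω i j} =
        ({ω : (Fin n → X) × (Fin n × Fin n → ℝ) | i < j} ∩
          {ω | ω.2 (i, j) ≤ 1 - Real.exp (-φ (ω.1 i) (ω.1 j))}) ∪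
        ({ω : (Fin n → X) × (Fin n × Fin n → ℝ) | j < i} ∩
          {ω | ω.2 (j, i) ≤ 1 - Real.exp (-φ (ω.1 j) (ω.1 i))}) := by
      ext ω
      simp only [edgeOcc, Set.mem_setOf_eq, Set.mem_union, Set.mem_inter_iff]
    rw [hs]
    exact (((MeasurableSet.const _).inter (measurableSet_le (htm (i, j)) (hxm i j))).union
      ((MeasurableSet.const _).inter (measurableSet_le (htm (j, i)) (hxm j i))))
  have hs : {ω : (Fin n → X) × (Fin n × Fin n → ℝ) | ∀ i ∈ I, ∀ j ∈ I, ¬ edgeOcc φ ω i j}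
      = ⋂ i ∈ (I : Set (Fin n)), ⋂ j ∈ (I : Set (Fin n)),
          {ω : (Fin n → X) × (Fin n × Fin n → ℝ) | edgeOcc φ ω i j}ᶜ := by
    ext ω
    simp
  rw [hs]
  exact MeasurableSet.biInter (Set.to_countable _) fun i _ =>
    MeasurableSet.biInter (Set.to_countable _) fun j _ => (hedge i j).compl

end Aux


section AuxLemmas

variable {X : Type*} [MeasurableSpace X]

lemma integral_pi_comp_inj (μ : Measure X) [IsProbabilityMeasure μ]
    {k n : ℕ} (e : Fin k → Fin n) (he : Function.Injective e) (f : (Fin k → X) → ℝ) :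
    ∫ x : Fin n → X, f (fun a => x (e a)) ∂(Measure.pi fun _ : Fin n => μ)
      = ∫ y : Fin k → X, f y ∂(Measure.pi fun _ : Fin k => μ) := by
  classical
  set p : Fin n → Prop := fun i => ∃ a, e a = i with hp
  let g : Fin k ≃ Subtype p :=
    Equiv.ofBijective (fun a => ⟨e a, a, rfl⟩)
      ⟨fun a b h => he (congrArg Subtype.val h),
       fun i => by obtain ⟨a, ha⟩ := i.2; exact ⟨a, Subtype.ext ha⟩⟩
  have h1 := (measurePreserving_piEquivPiSubtypeProd (fun _ : Fin n => μ) p).integral_comp'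
      (fun z : ({i // p i} → X) × ({i // ¬ p i} → X) => f (fun a => z.1 (g a)))
  have h2 : ∫ x : Fin n → X, f (fun a => x (e a)) ∂(Measure.pi fun _ : Fin n => μ)
      = ∫ z : ({i // p i} → X) × ({i // ¬ p i} → X), f (fun a => z.1 (g a))
          ∂((Measure.pi fun _ : {i // p i} => μ).prod (Measure.pi fun _ : {i // ¬ p i} => μ)) := by
    rw [← h1]; rfl
  rw [h2]
  have h3 : ∫ z : ({i // p i} → X) × ({i // ¬ p i} → X), f (fun a => z.1 (g a))
          ∂((Measure.pi fun _ : {i // p i} => μ).prod (Measure.pi fun _ : {i // ¬ p i} => μ))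
      = ∫ w : {i // p i} → X, f (fun a => w (g a)) ∂(Measure.pi fun _ : {i // p i} => μ) := by
    have := integral_prod_mul (μ := Measure.pi fun _ : {i // p i} => μ)
       (ν := Measure.pi fun _ : {i // ¬ p i} => μ)
       (f := fun w : {i // p i} → X => f (fun a => w (g a))) (g := fun _ => (1 : ℝ))
    simpa using this
  rw [h3, ← (measurePreserving_piCongrLeft (fun _ : Subtype p => μ) g).integral_comp'
      (fun w : {i // p i} → X => f (fun a => w (g a)))]
  refine integral_congr_ae (Filter.Eventually.of_forall fun y => ?_)
  show f (fun a => (MeasurableEquiv.piCongrLeft (fun _ => X) g) y (g a)) = f y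
  congr 1
  funext a
  simp [MeasurableEquiv.coe_piCongrLeft, Equiv.piCongrLeft_apply_apply]

lemma pi_smul_measure (m : Measure X) [SigmaFinite m] (c : ENNReal) (μ0 : Measure X)
    [SigmaFinite μ0] (hμ0 : μ0 = c • m) (k : ℕ) :
    (Measure.pi fun _ : Fin k => μ0) = (c ^ k) • Measure.pi (fun _ : Fin k => m) := by
  refine Measure.pi_eq (μ := fun _ : Fin k => μ0) fun s hs => ?_
  rw [Measure.smul_apply, Measure.pi_pi, smul_eq_mul]
  calc c ^ k * ∏ i, m (s i) = ∏ i : Fin k, (c * m (s i)) := by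
        rw [Finset.prod_mul_distrib, Finset.prod_const, Finset.card_univ, Fintype.card_fin]
    _ = ∏ i, μ0 (s i) := by simp [hμ0]

lemma prod_one_sub_div (n k : ℕ) (hk : k ≤ n) (hn : 0 < n) :
    ∏ i ∈ Finset.range k, (1 - (i : ℝ) / n) = (n.choose k : ℝ) * (Nat.factorial k) / n ^ k := by
  have hn' : (n : ℝ) ≠ 0 := Nat.cast_ne_zero.2 hn.ne'
  have h1 : ∀ i ∈ Finset.range k, (1 - (i : ℝ) / n) = ((n - i : ℕ) : ℝ) / n := by
    intro i hi
    have hin : i ≤ n := le_trans (Nat.le_of_lt_succ (Nat.lt_succ_of_lt (Finset.mem_range.1 hi))) hk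
    rw [Nat.cast_sub hin]
    field_simp
  rw [Finset.prod_congr rfl h1, Finset.prod_div_distrib, Finset.prod_const, Finset.card_range,
    ← Nat.cast_prod, ← Nat.descFactorial_eq_prod_range, Nat.descFactorial_eq_factorial_mul_choose]
  push_cast
  ring

end AuxLemmas

section Key

variable {X : Type*} [MeasurableSpace X]

open Classical in
lemma key_integral (φ : X → X → ℝ) (hφm : Measurable (Function.uncurry φ))
    (hφ0 : ∀ x y, 0 ≤ φ x y)
    (μ : Measure X) [IsProbabilityMeasure μ]
    (u : Measure ℝ) [IsProbabilityMeasure u] (hu : u = volume.restrict (Set.Icc (0:ℝ) 1))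
    {n : ℕ} (z : ℝ) (I : Finset (Fin n)) :
    (∫ ω : (Fin n → X) × (Fin n × Fin n → ℝ),
        (if ∀ i ∈ I, ∀ j ∈ I, ¬ edgeOcc φ ω i j then z ^ I.card else 0)
        ∂((Measure.pi fun _ : Fin n => μ).prod (Measure.pi fun _ : Fin n × Fin n => u)))
      = (∫ y : Fin I.card → X, Gker φ I.card y ∂(Measure.pi fun _ : Fin I.card => μ))
          * z ^ I.card := by
  classical
  set P : Measure (Fin n → X) := Measure.pi fun _ : Fin n => μ with hP
  set Q : Measure (Fin n × Fin n → ℝ) := Measure.pi fun _ : Fin n × Fin n => u with hQ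
  have hind : (fun ω : (Fin n → X) × (Fin n × Fin n → ℝ) =>
        (if ∀ i ∈ I, ∀ j ∈ I, ¬ edgeOcc φ ω i j then z ^ I.card else 0))
      = Set.indicator {ω : (Fin n → X) × (Fin n × Fin n → ℝ) |
          ∀ i ∈ I, ∀ j ∈ I, ¬ edgeOcc φ ω i j} (fun _ => z ^ I.card) := by
    funext ω
    by_cases h : ∀ i ∈ I, ∀ j ∈ I, ¬ edgeOcc φ ω i j <;> simp [Set.indicator, h]
  rw [hind, integral_indicator (measurableSet_indepEvent φ hφm I), setIntegral_const,
    smul_eq_mul]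
  have hQsec : ∀ x : Fin n → X,
      Q {t : Fin n × Fin n → ℝ | ∀ i ∈ I, ∀ j ∈ I,
          ¬ edgeOcc φ ((x, t) : (Fin n → X) × (Fin n × Fin n → ℝ)) i j}
        = ENNReal.ofReal (Fker φ I x) := by
    intro x
    have hset : {t : Fin n × Fin n → ℝ | ∀ i ∈ I, ∀ j ∈ I,
          ¬ edgeOcc φ ((x, t) : (Fin n → X) × (Fin n × Fin n → ℝ)) i j}
        = Set.pi Set.univ (fun p : Fin n × Fin n =>
            if p.1 ∈ I ∧ p.2 ∈ I ∧ p.1 < p.2 then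
              Set.Ioi (1 - Real.exp (-φ (x p.1) (x p.2))) else Set.univ) := by
      ext t
      simp only [Set.mem_setOf_eq, Set.mem_pi, Set.mem_univ, true_implies]
      constructor
      · intro h p
        split_ifs with hp
        · obtain ⟨h1, h2, h3⟩ := hp
          have h4 := h p.1 h1 p.2 h2
          simp only [edgeOcc, not_or, not_and] at h4
          have h5 := h4.1 h3
          rw [Set.mem_Ioi]
          exact lt_of_not_ge h5
        · exact Set.mem_univ _
      · intro h i hi j hj
        rintro (⟨hij, hle⟩ | ⟨hji, hle⟩)
        · have h4 := h (i, j)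
          rw [if_pos ⟨hi, hj, hij⟩, Set.mem_Ioi] at h4
          exact absurd hle (not_le.2 h4)
        · have h4 := h (j, i)
          rw [if_pos ⟨hj, hi, hji⟩, Set.mem_Ioi] at h4
          exact absurd hle (not_le.2 h4)
    rw [hset, hQ, Measure.pi_pi]
    have hfac : ∀ p : Fin n × Fin n,
        u (if p.1 ∈ I ∧ p.2 ∈ I ∧ p.1 < p.2 then
            Set.Ioi (1 - Real.exp (-φ (x p.1) (x p.2))) else Set.univ)
          = if p.1 ∈ I ∧ p.2 ∈ I ∧ p.1 < p.2 then
              ENNReal.ofReal (Real.exp (-φ (x p.1) (x p.2))) else 1 := by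
      intro p
      split_ifs with hp
      · have hexp1 : Real.exp (-φ (x p.1) (x p.2)) ≤ 1 :=
          Real.exp_le_one_iff.2 (neg_nonpos.2 (hφ0 _ _))
        have hc0 : (0:ℝ) ≤ 1 - Real.exp (-φ (x p.1) (x p.2)) := by linarith
        rw [hu, Measure.restrict_apply measurableSet_Ioi]
        have hinter : Set.Ioi (1 - Real.exp (-φ (x p.1) (x p.2))) ∩ Set.Icc (0:ℝ) 1
            = Set.Ioc (1 - Real.exp (-φ (x p.1) (x p.2))) 1 := by
          ext s
          simp only [Set.mem_inter_iff, Set.mem_Ioi, Set.mem_Icc, Set.mem_Ioc]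
          constructor
          · rintro ⟨h1, _, h3⟩; exact ⟨h1, h3⟩
          · rintro ⟨h1, h2⟩; exact ⟨h1, le_trans hc0 h1.le, h2⟩
        rw [hinter, Real.volume_Ioc]
        congr 1
        ring
      · exact measure_univ
    rw [Finset.prod_congr rfl fun p _ => hfac p, ← Finset.prod_filter,
      ← ENNReal.ofReal_prod_of_nonneg fun p _ => (Real.exp_pos _).le]
    rfl
  have hmeasA : (P.prod Q) {ω : (Fin n → X) × (Fin n × Fin n → ℝ) |
        ∀ i ∈ I, ∀ j ∈ I, ¬ edgeOcc φ ω i j}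
      = ∫⁻ x, ENNReal.ofReal (Fker φ I x) ∂P := by
    rw [Measure.prod_apply (measurableSet_indepEvent φ hφm I)]
    exact lintegral_congr fun x => hQsec x
  have htoReal : ((P.prod Q) {ω : (Fin n → X) × (Fin n × Fin n → ℝ) |
        ∀ i ∈ I, ∀ j ∈ I, ¬ edgeOcc φ ω i j}).toReal
      = ∫ x, Fker φ I x ∂P := by
    rw [hmeasA]
    exact (integral_eq_lintegral_of_nonneg_ae (f := Fker φ I)
      (Filter.Eventually.of_forall fun x => Finset.prod_nonneg fun p _ => (Real.exp_pos _).le)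
      (measurable_Fker φ hφm I).aestronglyMeasurable).symm
  rw [measureReal_def, htoReal]
  -- marginalize
  set es := I.orderIsoOfFin (rfl : I.card = I.card) with hes
  set e : Fin I.card → Fin n := fun a => (es a : Fin n) with he
  have heinj : Function.Injective e := fun a b h => es.injective (Subtype.ext h)
  have hemono : StrictMono e := fun a b hab => Subtype.coe_lt_coe.2 (es.strictMono hab)
  have h6 : ∀ x : Fin n → X, Fker φ I x = Gker φ I.card (fun a => x (e a)) := by
    intro x
    refine (Finset.prod_bij' (fun q _ => (e q.1, e q.2))
      (fun p hp => (es.symm ⟨p.1, ((Finset.mem_filter.1 hp).2).1⟩,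
                    es.symm ⟨p.2, ((Finset.mem_filter.1 hp).2).2.1⟩)) ?_ ?_ ?_ ?_ ?_).symm
    · intro q hq
      rw [Finset.mem_filter] at hq ⊢
      exact ⟨Finset.mem_univ _, (es q.1).2, (es q.2).2, hemono hq.2⟩
    · intro p hp
      rw [Finset.mem_filter] at hp ⊢
      refine ⟨Finset.mem_univ _, ?_⟩
      exact es.symm.strictMono (Subtype.mk_lt_mk.2 hp.2.2.2)
    · intro q hq
      refine Prod.ext ?_ ?_ <;> simp [e]
    · intro p hp
      refine Prod.ext ?_ ?_ <;> simp [e]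
    · intro q hq
      rfl
  rw [integral_congr_ae (Filter.Eventually.of_forall h6)]
  rw [hP, integral_pi_comp_inj μ e heinj (Gker φ I.card)]

end Key

/-- Expected hard-core partition function of the geometric random graph `G ~ D_n(V, φ)` at
activity `λ Vol / n` equals
`1 + Σ_{k=1}^n (λ^k / k!) Π_{i=0}^{k-1}(1 − i/n) ∫_{V^k} Π_{i<j} e^{−φ(x_i,x_j)} dν^k`. -/
theorem expected_hcZ_eq {X : Type*} [MeasurableSpace X]
    (ν : Measure X) (V : Set X) (hV : MeasurableSet V)
    [Fact (ν V < ⊤)] (hV0 : ν V ≠ 0)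
    (φ : X → X → ℝ) (hφm : Measurable (Function.uncurry φ))
    (hφ0 : ∀ x y, 0 ≤ φ x y) (hφsym : ∀ x y, φ x y = φ y x)
    (lam : ℝ) (hlam : 0 ≤ lam)
    (μ : Measure X) [IsProbabilityMeasure μ] (hμ : μ = (ν V)⁻¹ • ν.restrict V)
    (u : Measure ℝ) [IsProbabilityMeasure u] (hu : u = volume.restrict (Set.Icc (0:ℝ) 1))
    (n : ℕ) (hn : 0 < n) :
    (∫ ω, hcZrand φ (lam * (ν V).toReal / n) ω
        ∂ ((Measure.pi fun _ : Fin n => μ).prod (Measure.pi fun _ : Fin n × Fin n => u)))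
      = 1 + ∑ k ∈ Finset.Icc 1 n,
          (lam ^ k / (Nat.factorial k : ℝ)) *
          (∏ i ∈ Finset.range k, (1 - (i : ℝ) / n)) *
          ∫ y : Fin k → X,
            ∏ q ∈ Finset.univ.filter (fun q : Fin k × Fin k => q.1 < q.2),
              Real.exp (-φ (y q.1) (y q.2)) ∂ Measure.pi (fun _ : Fin k => ν.restrict V) := by
  classical
  have hVfin : ν V < ⊤ := Fact.out
  haveI hmfin : IsFiniteMeasure (ν.restrict V) :=
    ⟨by rw [Measure.restrict_apply_univ]; exact hVfin⟩
  have hVolpos : 0 < (ν V).toReal := ENNReal.toReal_pos hV0 hVfin.ne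
  set W : ℕ → ℝ := fun k =>
    (∫ y : Fin k → X, Gker φ k y ∂(Measure.pi fun _ : Fin k => μ))
      * (lam * (ν V).toReal / n) ^ k with hWdef
  have hint : ∀ I : Finset (Fin n),
      Integrable (fun ω : (Fin n → X) × (Fin n × Fin n → ℝ) =>
        if ∀ i ∈ I, ∀ j ∈ I, ¬ edgeOcc φ ω i j
          then (lam * (ν V).toReal / n) ^ I.card else 0)
      ((Measure.pi fun _ : Fin n => μ).prod (Measure.pi fun _ : Fin n × Fin n => u)) := by
    intro I
    have hind : (fun ω : (Fin n → X) × (Fin n × Fin n → ℝ) =>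
          if ∀ i ∈ I, ∀ j ∈ I, ¬ edgeOcc φ ω i j
            then (lam * (ν V).toReal / n) ^ I.card else 0)
        = Set.indicator {ω : (Fin n → X) × (Fin n × Fin n → ℝ) |
            ∀ i ∈ I, ∀ j ∈ I, ¬ edgeOcc φ ω i j}
            (fun _ => (lam * (ν V).toReal / n) ^ I.card) := by
      funext ω
      by_cases h : ∀ i ∈ I, ∀ j ∈ I, ¬ edgeOcc φ ω i j <;> simp [Set.indicator, h]
    rw [hind]
    exact (integrable_const _).indicator (measurableSet_indepEvent φ hφm I)
  calc (∫ ω, hcZrand φ (lam * (ν V).toReal / n) ω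
        ∂ ((Measure.pi fun _ : Fin n => μ).prod (Measure.pi fun _ : Fin n × Fin n => u)))
      = ∑ I : Finset (Fin n), W I.card := by
        simp only [hcZrand]
        rw [integral_finset_sum _ (fun I _ => hint I)]
        exact Finset.sum_congr rfl fun I _ =>
          key_integral φ hφm hφ0 μ u hu (lam * (ν V).toReal / n) I
    _ = ∑ k ∈ Finset.range (n + 1), (n.choose k : ℝ) * W k := by
        rw [← Finset.powerset_univ, Finset.sum_powerset, Finset.card_univ, Fintype.card_fin]
        refine Finset.sum_congr rfl fun k hk => ?_
        rw [Finset.sum_congr rfl (fun I hI => by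
          rw [Finset.mem_powersetCard_univ.1 hI] : ∀ I ∈ Finset.powersetCard k
            (Finset.univ : Finset (Fin n)), W I.card = W k)]
        rw [Finset.sum_const, Finset.card_powersetCard, Finset.card_univ, Fintype.card_fin,
          nsmul_eq_mul]
    _ = 1 + ∑ k ∈ Finset.Icc 1 n, (n.choose k : ℝ) * W k := by
        have hins : Finset.range (n + 1) = insert 0 (Finset.Icc 1 n) := by
          ext m
          simp only [Finset.mem_range, Finset.mem_insert, Finset.mem_Icc]
          omega
        rw [hins, Finset.sum_insert (by simp)]
        have hW0 : W 0 = 1 := by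
          have hG0 : ∀ y : Fin 0 → X, Gker φ 0 y = 1 := by
            intro y
            simp [Gker]
          rw [hWdef]
          simp only [pow_zero, mul_one]
          rw [integral_congr_ae (Filter.Eventually.of_forall hG0)]
          simp
        rw [hW0]
        norm_num
    _ = 1 + ∑ k ∈ Finset.Icc 1 n,
          (lam ^ k / (Nat.factorial k : ℝ)) *
          (∏ i ∈ Finset.range k, (1 - (i : ℝ) / n)) *
          ∫ y : Fin k → X,
            ∏ q ∈ Finset.univ.filter (fun q : Fin k × Fin k => q.1 < q.2),
              Real.exp (-φ (y q.1) (y q.2)) ∂ Measure.pi (fun _ : Fin k => ν.restrict V) := by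
        congr 1
        refine Finset.sum_congr rfl fun k hk => ?_
        obtain ⟨hk1, hk2⟩ := Finset.mem_Icc.1 hk
        have hμk : (Measure.pi fun _ : Fin k => μ)
            = ((ν V)⁻¹ ^ k) • Measure.pi (fun _ : Fin k => ν.restrict V) :=
          pi_smul_measure (ν.restrict V) ((ν V)⁻¹) μ hμ k
        have hiW : ∫ y : Fin k → X, Gker φ k y ∂(Measure.pi fun _ : Fin k => μ)
            = ((ν V).toReal)⁻¹ ^ k *
              ∫ y : Fin k → X, Gker φ k y ∂(Measure.pi fun _ : Fin k => ν.restrict V) := by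
          rw [hμk, integral_smul_measure, ENNReal.toReal_pow, ENNReal.toReal_inv, smul_eq_mul]
        rw [hWdef]
        simp only []
        rw [hiW, prod_one_sub_div n k hk2 hn]
        have hkfac : (Nat.factorial k : ℝ) ≠ 0 := Nat.cast_ne_zero.2 (Nat.factorial_ne_zero k)
        have hnne : (n : ℝ) ≠ 0 := Nat.cast_ne_zero.2 hn.ne'
        have hint2 : Gker φ k = fun y : Fin k → X =>
            ∏ q ∈ Finset.univ.filter (fun q : Fin k × Fin k => q.1 < q.2),
              Real.exp (-φ (y q.1) (y q.2)) := rfl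
        rw [hint2]
        field_simp
        have h1 : (ν V).toReal ^ k * (ν V).toReal⁻¹ ^ k = 1 := by
          rw [← mul_pow, mul_inv_cancel₀ hVolpos.ne', one_pow]
        have h2 : (n : ℝ) ^ k * (n : ℝ)⁻¹ ^ k = 1 := by
          rw [← mul_pow, mul_inv_cancel₀ hnne, one_pow]
        linear_combination ((n.choose k : ℝ) * (∫ y : Fin k → X, ∏ q ∈ Finset.univ.filter (fun q : Fin k × Fin k => q.1 < q.2), Real.exp (-φ (y q.1) (y q.2)) ∂ Measure.pi (fun _ : Fin k => ν.restrict V)) * lam ^ k * (n : ℝ) ^ k * (n : ℝ)⁻¹ ^ k) * h1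
          + ((n.choose k : ℝ) * (∫ y : Fin k → X, ∏ q ∈ Finset.univ.filter (fun q : Fin k × Fin k => q.1 < q.2), Real.exp (-φ (y q.1) (y q.2)) ∂ Measure.pi (fun _ : Fin k => ν.restrict V)) * lam ^ k) * h2
end

section
/- For G ~ D_n(V, φ), all ε > 0, and n ≥ 2ε⁻¹ max{e⁶λ²Vol², ln(2ε⁻¹)²}, the expected hard-core partition function satisfies (1 − ε)·Ξ(V, λ, φ) ≤ E[Z_G(λVol/n)] ≤ Ξ(V, λ, φ), where Ξ(V, λ, φ) = 1 + Σ_{k≥1} (λ^k/k!) ∫_{V^k} Π_{{i,j}∈binom([k],2)} e^{−φ(x_i,x_j)} dν^k(x) is the Gibbs point process partition function. -/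
set_option linter.unusedSectionVars false
set_option linter.unusedVariables false
set_option linter.dupNamespace false
set_option maxHeartbeats 1000000

open MeasureTheory

/-- Grand-canonical partition function of the repulsive Gibbs point process:
`Ξ(V, λ, φ) = 1 + Σ_{k ≥ 1} (λ^k/k!) ∫_{V^k} Π_{i<j} e^{−φ(x_i,x_j)} dν^k`. -/
noncomputable def gppXi {X : Type*} [MeasurableSpace X] (ν : Measure X) (V : Set X)
    [Fact (ν V < ⊤)] (φ : X → X → ℝ) (lam : ℝ) : ℝ :=
  1 + ∑' k : ℕ, (lam ^ (k + 1) / (Nat.factorial (k + 1) : ℝ)) *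
    ∫ y : Fin (k + 1) → X,
      ∏ q ∈ Finset.univ.filter (fun q : Fin (k + 1) × Fin (k + 1) => q.1 < q.2),
        Real.exp (-φ (y q.1) (y q.2)) ∂ Measure.pi (fun _ : Fin (k + 1) => ν.restrict V)


open Finset

namespace HcAux

variable {X : Type*} [MeasurableSpace X]

/-- product of `e^{-φ}` over a set of pairs -/
noncomputable def pprod (φ : X → X → ℝ) {m : ℕ} (S : Finset (Fin m × Fin m))
    (x : Fin m → X) : ℝ :=
  ∏ q ∈ S, Real.exp (-φ (x q.1) (x q.2))

/-- ordered pairs with both coordinates in `I` -/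
def pairs {m : ℕ} (I : Finset (Fin m)) : Finset (Fin m × Fin m) :=
  (I ×ˢ I).filter fun q => q.1 < q.2

lemma pairs_univ (m : ℕ) :
    pairs (univ : Finset (Fin m)) = univ.filter (fun q : Fin m × Fin m => q.1 < q.2) := by
  simp [pairs]

lemma pairs_mono {m : ℕ} {I J : Finset (Fin m)} (h : I ⊆ J) : pairs I ⊆ pairs J := by
  intro q hq
  simp only [pairs, mem_filter, mem_product] at hq ⊢
  exact ⟨⟨h hq.1.1, h hq.1.2⟩, hq.2⟩

variable {φ : X → X → ℝ}

lemma pprod_nonneg {m : ℕ} {S : Finset (Fin m × Fin m)} (x : Fin m → X) :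
    0 ≤ pprod φ S x :=
  Finset.prod_nonneg fun _ _ => (Real.exp_pos _).le

lemma pprod_le_one (hφ0 : ∀ x y, 0 ≤ φ x y) {m : ℕ} {S : Finset (Fin m × Fin m)}
    (x : Fin m → X) : pprod φ S x ≤ 1 :=
  Finset.prod_le_one (fun _ _ => (Real.exp_pos _).le)
    (fun q _ => Real.exp_le_one_iff.2 (neg_nonpos.2 (hφ0 _ _)))

lemma pprod_anti (hφ0 : ∀ x y, 0 ≤ φ x y) {m : ℕ} {S T : Finset (Fin m × Fin m)}
    (hST : S ⊆ T) (x : Fin m → X) : pprod φ T x ≤ pprod φ S x := by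
  rw [pprod, ← Finset.prod_sdiff hST]
  calc (∏ q ∈ T \ S, Real.exp (-φ (x q.1) (x q.2))) * ∏ q ∈ S, Real.exp (-φ (x q.1) (x q.2))
      ≤ 1 * ∏ q ∈ S, Real.exp (-φ (x q.1) (x q.2)) := by
        apply mul_le_mul_of_nonneg_right _ (pprod_nonneg x)
        exact pprod_le_one hφ0 x
    _ = pprod φ S x := by rw [one_mul]; rfl

lemma pprod_measurable (hφm : Measurable (Function.uncurry φ)) {m : ℕ}
    (S : Finset (Fin m × Fin m)) : Measurable (pprod φ S) := by
  apply Finset.measurable_prod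
  intro q _
  have h1 : Measurable fun x : Fin m → X => (x q.1, x q.2) :=
    (measurable_pi_apply q.1).prodMk (measurable_pi_apply q.2)
  exact Real.measurable_exp.comp ((hφm.comp h1).neg)

lemma pprod_integrable (hφm : Measurable (Function.uncurry φ)) (hφ0 : ∀ x y, 0 ≤ φ x y)
    {m : ℕ} (S : Finset (Fin m × Fin m)) (P : Measure (Fin m → X)) [IsProbabilityMeasure P] :
    Integrable (pprod φ S) P := by
  refine (integrable_const (1 : ℝ)).mono' (pprod_measurable hφm S).aestronglyMeasurable ?_
  filter_upwards with x
  rw [Real.norm_eq_abs, abs_of_nonneg (pprod_nonneg x)]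
  exact pprod_le_one hφ0 x

lemma marg (μ : Measure X) [IsProbabilityMeasure μ] {n k : ℕ} (I : Finset (Fin n))
    (h : I.card = k) :
    MeasurePreserving (fun (x : Fin n → X) (j : Fin k) => x (I.orderEmbOfFin h j))
      (Measure.pi fun _ : Fin n => μ) (Measure.pi fun _ : Fin k => μ) := by
  letI F : Fintype {i : Fin n // i ∈ I} := Subtype.fintype _
  have e1 := measurePreserving_piEquivPiSubtypeProd (fun _ : Fin n => μ) (fun i => i ∈ I)
  have e2 : MeasurePreserving Prod.fst
      ((Measure.pi fun _ : {i : Fin n // i ∈ I} => μ).prod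
        (Measure.pi fun _ : {i : Fin n // ¬ i ∈ I} => μ))
      (Measure.pi fun _ : {i : Fin n // i ∈ I} => μ) :=
    ⟨measurable_fst, by rw [Measure.map_fst_prod]; simp⟩
  set σ : Fin k ≃ {i : Fin n // i ∈ I} := (I.orderIsoOfFin h).toEquiv with hσ
  have e3 := (measurePreserving_piCongrLeft (fun _ : {i : Fin n // i ∈ I} => μ) σ).symm
    (MeasurableEquiv.piCongrLeft (fun _ => X) σ)
  have := (e3.comp e2).comp e1
  convert this using 1
  rfl

end HcAux

namespace HcAux

variable {X : Type*} [MeasurableSpace X] {φ : X → X → ℝ}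

noncomputable def Ik (φ : X → X → ℝ) (μ : Measure X) (k : ℕ) : ℝ :=
  ∫ y, pprod φ (pairs (univ : Finset (Fin k))) y ∂ Measure.pi (fun _ : Fin k => μ)

lemma pairs_image {n k : ℕ} (I : Finset (Fin n)) (h : I.card = k) :
    pairs I = (pairs (univ : Finset (Fin k))).image
      (fun q => (I.orderEmbOfFin h q.1, I.orderEmbOfFin h q.2)) := by
  set f := I.orderEmbOfFin h
  ext ⟨i, j⟩
  simp only [pairs, mem_image, mem_filter, mem_product, mem_univ, true_and, and_true]
  constructor
  · rintro ⟨⟨hi, hj⟩, hij⟩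
    have hi' : i ∈ Set.range f := by rw [Finset.range_orderEmbOfFin]; exact hi
    have hj' : j ∈ Set.range f := by rw [Finset.range_orderEmbOfFin]; exact hj
    obtain ⟨a, ha⟩ := hi'
    obtain ⟨b, hb⟩ := hj'
    refine ⟨(a, b), ?_, by rw [ha, hb]⟩
    have : f a < f b := by rw [ha, hb]; exact hij
    exact f.strictMono.lt_iff_lt.1 this
  · rintro ⟨⟨a, b⟩, hab, heq⟩
    obtain ⟨h1, h2⟩ := Prod.mk.injEq .. ▸ heq
    refine ⟨⟨?_, ?_⟩, ?_⟩
    · rw [← h1]; exact Finset.orderEmbOfFin_mem I h a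
    · rw [← h2]; exact Finset.orderEmbOfFin_mem I h b
    · rw [← h1, ← h2]; exact f.strictMono hab

lemma pprod_pairs_comp {n k : ℕ} (I : Finset (Fin n)) (h : I.card = k) (x : Fin n → X) :
    pprod φ (pairs I) x
      = pprod φ (pairs (univ : Finset (Fin k))) (fun j => x (I.orderEmbOfFin h j)) := by
  rw [pprod, pairs_image I h, Finset.prod_image]
  · rfl
  · intro q _ r _ hqr
    obtain ⟨h1, h2⟩ := Prod.mk.injEq .. ▸ hqr
    exact Prod.ext ((I.orderEmbOfFin h).injective h1) ((I.orderEmbOfFin h).injective h2)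

lemma integral_pprod_pairs (hφm : Measurable (Function.uncurry φ))
    (μ : Measure X) [IsProbabilityMeasure μ] {n k : ℕ} (I : Finset (Fin n)) (h : I.card = k) :
    ∫ x, pprod φ (pairs I) x ∂ Measure.pi (fun _ : Fin n => μ) = Ik φ μ k := by
  have hmp := marg μ I h
  calc ∫ x, pprod φ (pairs I) x ∂ Measure.pi (fun _ : Fin n => μ)
      = ∫ x, pprod φ (pairs (univ : Finset (Fin k)))
          ((fun (x : Fin n → X) (j : Fin k) => x (I.orderEmbOfFin h j)) x)
          ∂ Measure.pi (fun _ : Fin n => μ) := by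
        congr 1; funext x; exact pprod_pairs_comp I h x
    _ = ∫ y, pprod φ (pairs (univ : Finset (Fin k))) y ∂ Measure.pi (fun _ : Fin k => μ) := by
        rw [← hmp.map_eq, integral_map hmp.aemeasurable
          (pprod_measurable hφm _).aestronglyMeasurable]

lemma Ik_nonneg (φ : X → X → ℝ) (μ : Measure X) [IsProbabilityMeasure μ] (k : ℕ) :
    0 ≤ Ik φ μ k :=
  integral_nonneg fun x => pprod_nonneg x

lemma Ik_le_one (hφm : Measurable (Function.uncurry φ)) (hφ0 : ∀ x y, 0 ≤ φ x y)
    (μ : Measure X) [IsProbabilityMeasure μ] (k : ℕ) : Ik φ μ k ≤ 1 := by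
  have := integral_mono (μ := Measure.pi (fun _ : Fin k => μ))
    (pprod_integrable hφm hφ0 (pairs (univ : Finset (Fin k))) _) (integrable_const (1 : ℝ))
    (fun x => pprod_le_one hφ0 x)
  simpa [Ik] using this

lemma Ik_succ_le (hφm : Measurable (Function.uncurry φ)) (hφ0 : ∀ x y, 0 ≤ φ x y)
    (μ : Measure X) [IsProbabilityMeasure μ] (k : ℕ) : Ik φ μ (k + 1) ≤ Ik φ μ k := by
  have hcard : ((univ : Finset (Fin (k+1))).erase (Fin.last k)).card = k := by
    rw [Finset.card_erase_of_mem (mem_univ _)]; simp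
  rw [← integral_pprod_pairs hφm μ _ hcard]
  exact integral_mono (pprod_integrable hφm hφ0 _ _) (pprod_integrable hφm hφ0 _ _)
    (fun x => pprod_anti hφ0 (pairs_mono (Finset.erase_subset _ _)) x)


lemma mem_indepSet_iff {n : ℕ} (I : Finset (Fin n)) (x : Fin n → X) (t : Fin n × Fin n → ℝ) :
    (∀ i ∈ I, ∀ j ∈ I, ¬ edgeOcc φ (x, t) i j) ↔
      t ∈ Set.pi Set.univ (fun q : Fin n × Fin n => if q ∈ pairs I
        then Set.Ioi (1 - Real.exp (-φ (x q.1) (x q.2))) else Set.univ) := by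
  rw [Set.mem_univ_pi]
  constructor
  · intro hcond q
    by_cases hq : q ∈ pairs I
    · simp only [hq, if_pos]
      simp only [pairs, mem_filter, mem_product] at hq
      have := hcond q.1 hq.1.1 q.2 hq.1.2
      rw [edgeOcc] at this
      push_neg at this
      exact Set.mem_Ioi.2 (by simpa using this.1 hq.2)
    · simp [hq]
  · intro hB i hi j hj hedge
    rcases hedge with ⟨hij, hle⟩ | ⟨hji, hle⟩
    · have hq : (i, j) ∈ pairs I := by simp [pairs, hi, hj, hij]
      have := hB (i, j)
      rw [if_pos hq] at this
      exact absurd hle (not_le.2 this)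
    · have hq : (j, i) ∈ pairs I := by simp [pairs, hi, hj, hji]
      have := hB (j, i)
      rw [if_pos hq] at this
      exact absurd hle (not_le.2 this)

open Classical in
lemma inner_integral (hφ0 : ∀ x y, 0 ≤ φ x y)
    (u : Measure ℝ) [IsProbabilityMeasure u]
    (hu : u = volume.restrict (Set.Icc (0:ℝ) 1)) {n : ℕ} (I : Finset (Fin n))
    (c : ℝ) (x : Fin n → X) :
    ∫ t, ((fun t => if ∀ i ∈ I, ∀ j ∈ I, ¬ edgeOcc φ (x, t) i j then c else 0) t)
      ∂ Measure.pi (fun _ : Fin n × Fin n => u)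
      = c * pprod φ (pairs I) x := by
  classical
  set v : Fin n × Fin n → ℝ := fun q => 1 - Real.exp (-φ (x q.1) (x q.2)) with hv
  set B : Set (Fin n × Fin n → ℝ) := Set.pi Set.univ
    (fun q => if q ∈ pairs I then Set.Ioi (v q) else Set.univ) with hB
  have hBm : MeasurableSet B := by
    apply MeasurableSet.univ_pi
    intro q
    split
    · exact measurableSet_Ioi
    · exact MeasurableSet.univ
  have h1 : (fun t => if ∀ i ∈ I, ∀ j ∈ I, ¬ edgeOcc φ (x, t) i j then c else 0)
      = B.indicator (fun _ => c) := by
    funext t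
    by_cases hcond : ∀ i ∈ I, ∀ j ∈ I, ¬ edgeOcc φ (x, t) i j
    · rw [if_pos hcond, Set.indicator_of_mem ((mem_indepSet_iff I x t).1 hcond) _]
    · rw [if_neg hcond, Set.indicator_of_notMem
        (fun hm => hcond ((mem_indepSet_iff I x t).2 hm)) _]
  rw [h1, integral_indicator_const c hBm]
  have h2 : Measure.pi (fun _ : Fin n × Fin n => u) B
      = ∏ q ∈ pairs I, ENNReal.ofReal (Real.exp (-φ (x q.1) (x q.2))) := by
    rw [hB, Measure.pi_pi]
    have huI : ∀ q : Fin n × Fin n, q ∈ pairs I →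
        u (Set.Ioi (v q)) = ENNReal.ofReal (Real.exp (-φ (x q.1) (x q.2))) := by
      intro q _
      have hexp0 : 0 < Real.exp (-φ (x q.1) (x q.2)) := Real.exp_pos _
      have hexp1 : Real.exp (-φ (x q.1) (x q.2)) ≤ 1 :=
        Real.exp_le_one_iff.2 (neg_nonpos.2 (hφ0 _ _))
      have hv0 : 0 ≤ v q := by simp only [hv]; linarith
      have hIoc : Set.Ioi (v q) ∩ Set.Icc (0:ℝ) 1 = Set.Ioc (v q) 1 := by
        ext s
        simp only [Set.mem_inter_iff, Set.mem_Ioi, Set.mem_Icc, Set.mem_Ioc]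
        constructor
        · rintro ⟨h3, _, h5⟩; exact ⟨h3, h5⟩
        · rintro ⟨h3, h4⟩
          refine ⟨h3, le_trans hv0 h3.le, h4⟩
      rw [hu, Measure.restrict_apply measurableSet_Ioi, hIoc, Real.volume_Ioc]
      congr 1
      rw [hv]
      ring
    calc (∏ q : Fin n × Fin n, u (if q ∈ pairs I then Set.Ioi (v q) else Set.univ))
        = ∏ q : Fin n × Fin n, (if q ∈ pairs I
            then ENNReal.ofReal (Real.exp (-φ (x q.1) (x q.2))) else 1) := by
          apply Finset.prod_congr rfl
          intro q _
          split_ifs with hq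
          · exact huI q hq
          · exact measure_univ
      _ = ∏ q ∈ pairs I, ENNReal.ofReal (Real.exp (-φ (x q.1) (x q.2))) := by
          rw [Finset.prod_ite_mem, Finset.univ_inter]
  rw [measureReal_def, h2, ENNReal.toReal_prod]
  have : ∀ q ∈ pairs I, (ENNReal.ofReal (Real.exp (-φ (x q.1) (x q.2)))).toReal
      = Real.exp (-φ (x q.1) (x q.2)) := fun q _ => ENNReal.toReal_ofReal (Real.exp_pos _).le
  rw [Finset.prod_congr rfl this, smul_eq_mul, mul_comm]
  rfl

open Classical in
lemma measSet (hφm : Measurable (Function.uncurry φ)) {n : ℕ} (I : Finset (Fin n)) :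
    MeasurableSet {ω : (Fin n → X) × (Fin n × Fin n → ℝ) |
      ∀ i ∈ I, ∀ j ∈ I, ¬ edgeOcc φ ω i j} := by
  have hedge : ∀ i j : Fin n,
      MeasurableSet {ω : (Fin n → X) × (Fin n × Fin n → ℝ) | edgeOcc φ ω i j} := by
    intro i j
    have hmeas : ∀ a b : Fin n, MeasurableSet {ω : (Fin n → X) × (Fin n × Fin n → ℝ) |
        ω.2 (a, b) ≤ 1 - Real.exp (-φ (ω.1 a) (ω.1 b))} := by
      intro a b
      apply measurableSet_le
      · exact (measurable_pi_apply _).comp measurable_snd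
      · have h1 : Measurable fun ω : (Fin n → X) × (Fin n × Fin n → ℝ) =>
            (ω.1 a, ω.1 b) :=
          ((measurable_pi_apply a).comp measurable_fst).prodMk
            ((measurable_pi_apply b).comp measurable_fst)
        exact (measurable_const.sub (Real.measurable_exp.comp (hφm.comp h1).neg))
    have : {ω : (Fin n → X) × (Fin n × Fin n → ℝ) | edgeOcc φ ω i j}
        = ({ω | i < j} ∩ {ω | (fun ω : (Fin n → X) × (Fin n × Fin n → ℝ) =>
            ω.2 (i, j) ≤ 1 - Real.exp (-φ (ω.1 i) (ω.1 j))) ω})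
          ∪ ({ω | j < i} ∩ {ω | (fun ω : (Fin n → X) × (Fin n × Fin n → ℝ) =>
            ω.2 (j, i) ≤ 1 - Real.exp (-φ (ω.1 j) (ω.1 i))) ω}) := by
      ext ω; simp [edgeOcc, Set.mem_setOf_eq, Set.mem_inter_iff, Set.mem_union]
    rw [this]
    exact ((MeasurableSet.const _).inter (hmeas i j)).union
      ((MeasurableSet.const _).inter (hmeas j i))
  have : {ω : (Fin n → X) × (Fin n × Fin n → ℝ) | ∀ i ∈ I, ∀ j ∈ I, ¬ edgeOcc φ ω i j}
      = ⋂ i ∈ I, ⋂ j ∈ I, {ω : (Fin n → X) × (Fin n × Fin n → ℝ) | edgeOcc φ ω i j}ᶜ := by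
    ext ω; simp
  rw [this]
  exact MeasurableSet.biInter (Set.to_countable _) fun i _ =>
    MeasurableSet.biInter (Set.to_countable _) fun j _ => (hedge i j).compl

open Classical in
lemma expectation_formula (hφm : Measurable (Function.uncurry φ)) (hφ0 : ∀ x y, 0 ≤ φ x y)
    (μ : Measure X) [IsProbabilityMeasure μ] (u : Measure ℝ) [IsProbabilityMeasure u]
    (hu : u = volume.restrict (Set.Icc (0:ℝ) 1)) (z : ℝ) (n : ℕ) :
    (∫ ω, hcZrand φ z ω ∂ ((Measure.pi fun _ : Fin n => μ).prod
        (Measure.pi fun _ : Fin n × Fin n => u)))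
      = ∑ m ∈ range (n + 1), (n.choose m : ℝ) * (z ^ m * Ik φ μ m) := by
  have hind : ∀ I : Finset (Fin n),
      (fun ω : (Fin n → X) × (Fin n × Fin n → ℝ) =>
          if ∀ i ∈ I, ∀ j ∈ I, ¬ edgeOcc φ ω i j then z ^ I.card else 0)
        = Set.indicator {ω : (Fin n → X) × (Fin n × Fin n → ℝ) |
            ∀ i ∈ I, ∀ j ∈ I, ¬ edgeOcc φ ω i j} (fun _ => z ^ I.card) := by
    intro I
    funext ω
    by_cases hcond : ∀ i ∈ I, ∀ j ∈ I, ¬ edgeOcc φ ω i j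
    · rw [if_pos hcond, Set.indicator_of_mem (by exact hcond)]
    · rw [if_neg hcond, Set.indicator_of_notMem (by exact hcond)]
  have hInt : ∀ I : Finset (Fin n),
      Integrable (fun ω : (Fin n → X) × (Fin n × Fin n → ℝ) =>
          if ∀ i ∈ I, ∀ j ∈ I, ¬ edgeOcc φ ω i j then z ^ I.card else 0)
        ((Measure.pi fun _ : Fin n => μ).prod (Measure.pi fun _ : Fin n × Fin n => u)) := by
    intro I
    rw [hind I]
    exact (integrable_const _).indicator (measSet hφm I)
  rw [show (fun ω => hcZrand φ z ω) = fun ω : (Fin n → X) × (Fin n × Fin n → ℝ) =>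
      ∑ I : Finset (Fin n), (if ∀ i ∈ I, ∀ j ∈ I, ¬ edgeOcc φ ω i j then z ^ I.card else 0)
    from rfl]
  rw [integral_finset_sum univ fun I _ => hInt I]
  have hIval : ∀ I : Finset (Fin n),
      (∫ ω, (if ∀ i ∈ I, ∀ j ∈ I, ¬ edgeOcc φ ω i j then z ^ I.card else 0)
        ∂ ((Measure.pi fun _ : Fin n => μ).prod (Measure.pi fun _ : Fin n × Fin n => u)))
      = z ^ I.card * Ik φ μ I.card := by
    intro I
    rw [integral_prod _ (hInt I)]
    have hin : ∀ x : Fin n → X,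
        (∫ t, (if ∀ i ∈ I, ∀ j ∈ I, ¬ edgeOcc φ (x, t) i j then z ^ I.card else 0)
          ∂ Measure.pi (fun _ : Fin n × Fin n => u))
        = z ^ I.card * pprod φ (pairs I) x := fun x => inner_integral hφ0 u hu I _ x
    rw [integral_congr_ae (Filter.Eventually.of_forall hin), integral_const_mul,
      integral_pprod_pairs hφm μ I rfl]
  rw [Finset.sum_congr rfl fun I _ => hIval I]
  rw [← Finset.powerset_univ, Finset.sum_powerset_apply_card
    (fun m => z ^ m * Ik φ μ m) (x := (univ : Finset (Fin n)))]
  rw [Finset.card_univ, Fintype.card_fin]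
  apply Finset.sum_congr rfl
  intro m _
  rw [nsmul_eq_mul]

lemma Ik_zero (φ : X → X → ℝ) (μ : Measure X) [IsProbabilityMeasure μ] : Ik φ μ 0 = 1 := by
  have : pairs (univ : Finset (Fin 0)) = ∅ := by
    apply Finset.eq_empty_of_forall_notMem
    intro q
    exact absurd q.1.2 (by simp)
  rw [Ik]
  simp only [this]
  simp [pprod]

lemma pi_restrict_eq (ν : Measure X) (V : Set X) [Fact (ν V < ⊤)] (hV0 : ν V ≠ 0)
    (μ : Measure X) [IsProbabilityMeasure μ] (hμ : μ = (ν V)⁻¹ • ν.restrict V) (m : ℕ) :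
    Measure.pi (fun _ : Fin m => ν.restrict V)
      = (ν V) ^ m • Measure.pi (fun _ : Fin m => μ) := by
  have hVtop : ν V ≠ ⊤ := (Fact.out (p := ν V < ⊤)).ne
  refine Measure.pi_eq fun s hs => ?_
  rw [Measure.smul_apply, Measure.pi_pi, smul_eq_mul]
  have : ∀ i : Fin m, (ν.restrict V) (s i) = ν V * μ (s i) := by
    intro i
    rw [hμ, Measure.smul_apply, smul_eq_mul, ← mul_assoc,
      ENNReal.mul_inv_cancel hV0 hVtop, one_mul]
  rw [Finset.prod_congr rfl fun i _ => this i, Finset.prod_mul_distrib,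
    Finset.prod_const, Finset.card_univ, Fintype.card_fin]

lemma integral_pi_restrict (ν : Measure X) (V : Set X) [Fact (ν V < ⊤)] (hV0 : ν V ≠ 0)
    (μ : Measure X) [IsProbabilityMeasure μ] (hμ : μ = (ν V)⁻¹ • ν.restrict V) (m : ℕ)
    (f : (Fin m → X) → ℝ) :
    ∫ y, f y ∂ Measure.pi (fun _ : Fin m => ν.restrict V)
      = (ν V).toReal ^ m * ∫ y, f y ∂ Measure.pi (fun _ : Fin m => μ) := by
  rw [pi_restrict_eq ν V hV0 μ hμ m, integral_smul_measure, ENNReal.toReal_pow, smul_eq_mul]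

lemma gppXi_eq (ν : Measure X) (V : Set X) [Fact (ν V < ⊤)] (hV0 : ν V ≠ 0)
    (φ : X → X → ℝ) (hφm : Measurable (Function.uncurry φ)) (hφ0 : ∀ x y, 0 ≤ φ x y)
    (lam : ℝ) (hlam : 0 ≤ lam)
    (μ : Measure X) [IsProbabilityMeasure μ] (hμ : μ = (ν V)⁻¹ • ν.restrict V) :
    gppXi ν V φ lam
      = ∑' k : ℕ, (lam * (ν V).toReal) ^ k / (Nat.factorial k : ℝ) * Ik φ μ k := by
  have hsum : Summable (fun k : ℕ =>
      (lam * (ν V).toReal) ^ k / (Nat.factorial k : ℝ) * Ik φ μ k) := by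
    apply Summable.of_nonneg_of_le
    · intro k
      apply mul_nonneg (div_nonneg (pow_nonneg (mul_nonneg hlam ENNReal.toReal_nonneg) _) _)
        (Ik_nonneg φ μ k)
      positivity
    · intro k
      calc (lam * (ν V).toReal) ^ k / (Nat.factorial k : ℝ) * Ik φ μ k
          ≤ (lam * (ν V).toReal) ^ k / (Nat.factorial k : ℝ) * 1 := by
            apply mul_le_mul_of_nonneg_left (Ik_le_one hφm hφ0 μ k)
            positivity
        _ = (lam * (ν V).toReal) ^ k / (Nat.factorial k : ℝ) := mul_one _
    · exact Real.summable_pow_div_factorial _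
  rw [Summable.tsum_eq_zero_add hsum]
  have h0 : (lam * (ν V).toReal) ^ 0 / (Nat.factorial 0 : ℝ) * Ik φ μ 0 = 1 := by
    rw [Ik_zero]; simp
  rw [h0, gppXi]
  congr 1
  apply tsum_congr
  intro k
  have hint : (∫ y : Fin (k + 1) → X,
        ∏ q ∈ Finset.univ.filter (fun q : Fin (k + 1) × Fin (k + 1) => q.1 < q.2),
          Real.exp (-φ (y q.1) (y q.2))
        ∂ Measure.pi (fun _ : Fin (k + 1) => ν.restrict V))
      = (ν V).toReal ^ (k+1) * Ik φ μ (k+1) := by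
    rw [show (fun y : Fin (k+1) → X =>
        ∏ q ∈ Finset.univ.filter (fun q : Fin (k + 1) × Fin (k + 1) => q.1 < q.2),
          Real.exp (-φ (y q.1) (y q.2))) = pprod φ (pairs (univ : Finset (Fin (k+1))))
      from by funext y; rw [pprod, pairs_univ]]
    exact integral_pi_restrict ν V hV0 μ hμ (k+1) _
  rw [hint, Ik]
  rw [mul_pow]
  ring

lemma r_nonneg (n k : ℕ) : 0 ≤ (n.descFactorial k : ℝ) / (n:ℝ) ^ k := by positivity

lemma r_le_one (n k : ℕ) : (n.descFactorial k : ℝ) / (n:ℝ) ^ k ≤ 1 := by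
  apply div_le_one_of_le₀
  · exact_mod_cast Nat.descFactorial_le_pow n k
  · positivity

lemma one_sub_r_le {n : ℕ} (hn : 1 ≤ n) : ∀ k : ℕ,
    1 - (n.descFactorial k : ℝ) / (n:ℝ) ^ k ≤ (k : ℝ) * ((k:ℝ) - 1) / (2 * n)
  | 0 => by simp
  | (k+1) => by
    have hn0 : (0:ℝ) < n := by exact_mod_cast hn
    have h2n : (0:ℝ) < 2 * n := by linarith
    have hk0 : (0:ℝ) ≤ (k:ℝ) := Nat.cast_nonneg k
    push_cast
    by_cases hk : k < n
    · have hIH := one_sub_r_le hn k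
      have hR1 := r_le_one n k
      have hR0 := r_nonneg n k
      have hkn : (k:ℝ) ≤ (n:ℝ) := by exact_mod_cast hk.le
      have hcast : ((n.descFactorial (k+1) : ℕ) : ℝ)
          = ((n:ℝ) - (k:ℝ)) * (n.descFactorial k : ℝ) := by
        rw [Nat.descFactorial_succ]
        push_cast [Nat.cast_sub hk.le]
        ring
      have hpowpos : (0:ℝ) < (n:ℝ) ^ k := by positivity
      have hr1 : ((n.descFactorial (k+1) : ℕ) : ℝ) / (n:ℝ)^(k+1)
          = ((n.descFactorial k : ℝ) / (n:ℝ) ^ k) * (((n:ℝ) - (k:ℝ))/(n:ℝ)) := by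
        rw [hcast, pow_succ]
        field_simp
      rw [hr1]
      rw [le_div_iff₀ h2n] at hIH ⊢
      have hx : ((n.descFactorial k : ℝ) / (n:ℝ) ^ k) * (((n:ℝ) - (k:ℝ))/(n:ℝ)) * (2*n)
          = 2 * ((n.descFactorial k : ℝ) / (n:ℝ)^k) * ((n:ℝ) - (k:ℝ)) := by
        field_simp
      nlinarith [mul_nonneg (sub_nonneg.2 hR1) hk0, mul_nonneg hR0 hk0]
    · have h0 : n.descFactorial (k+1) = 0 :=
        Nat.descFactorial_eq_zero_iff_lt.2 (by omega)
      rw [h0]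
      simp only [Nat.cast_zero, zero_div, sub_zero]
      rw [le_div_iff₀ h2n]
      have hkn : (n:ℝ) ≤ (k:ℝ) := by exact_mod_cast not_lt.1 hk
      have h1n : (1:ℝ) ≤ (n:ℝ) := by exact_mod_cast hn
      nlinarith [mul_le_mul (by linarith : (n:ℝ)+1 ≤ (k:ℝ)+1) hkn (by linarith : (0:ℝ) ≤ (n:ℝ)) (by linarith : (0:ℝ) ≤ (k:ℝ)+1)]

end HcAux

/-- For `n ≥ 2ε⁻¹ max{e⁶λ²Vol², ln(2ε⁻¹)²}`, the expected hard-core partition function of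
the geometric random graph at activity `λ Vol / n` is between `(1−ε) Ξ(V,λ,φ)` and
`Ξ(V,λ,φ)`. -/
theorem expected_hcZ_close_to_gppXi {X : Type*} [MeasurableSpace X]
    (ν : Measure X) (V : Set X) (hV : MeasurableSet V)
    [Fact (ν V < ⊤)] (hV0 : ν V ≠ 0)
    (φ : X → X → ℝ) (hφm : Measurable (Function.uncurry φ))
    (hφ0 : ∀ x y, 0 ≤ φ x y) (hφsym : ∀ x y, φ x y = φ y x)
    (lam : ℝ) (hlam : 0 ≤ lam)
    (μ : Measure X) [IsProbabilityMeasure μ] (hμ : μ = (ν V)⁻¹ • ν.restrict V)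
    (u : Measure ℝ) [IsProbabilityMeasure u] (hu : u = volume.restrict (Set.Icc (0:ℝ) 1))
    (ε : ℝ) (hε : 0 < ε) (n : ℕ)
    (hn : 2 * ε⁻¹ * max (Real.exp 6 * lam ^ 2 * (ν V).toReal ^ 2)
        ((Real.log (2 * ε⁻¹)) ^ 2) ≤ n) :
    (1 - ε) * gppXi ν V φ lam
      ≤ (∫ ω, hcZrand φ (lam * (ν V).toReal / n) ω
          ∂ ((Measure.pi fun _ : Fin n => μ).prod
              (Measure.pi fun _ : Fin n × Fin n => u))) ∧
    (∫ ω, hcZrand φ (lam * (ν V).toReal / n) ω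
        ∂ ((Measure.pi fun _ : Fin n => μ).prod
            (Measure.pi fun _ : Fin n × Fin n => u)))
      ≤ gppXi ν V φ lam := by
  have hVtop : ν V < ⊤ := Fact.out
  rcases eq_or_lt_of_le hlam with hlam0 | hlam0
  · -- degenerate case lam = 0
    have hz : lam * (ν V).toReal / n = 0 := by rw [← hlam0]; simp
    have hZ : ∀ ω : (Fin n → X) × (Fin n × Fin n → ℝ),
        hcZrand φ (lam * (ν V).toReal / n) ω = 1 := by
      intro ω
      rw [hz, hcZrand, Finset.sum_eq_single ∅]
      · simp
      · intro I _ hI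
        have hcard : I.card ≠ 0 := fun hI0 => hI (Finset.card_eq_zero.1 hI0)
        rw [zero_pow hcard]
        simp
      · intro h; exact absurd (Finset.mem_univ _) h
    have hint1 : (∫ ω, hcZrand φ (lam * (ν V).toReal / n) ω
        ∂ ((Measure.pi fun _ : Fin n => μ).prod
            (Measure.pi fun _ : Fin n × Fin n => u))) = 1 := by
      rw [integral_congr_ae (Filter.Eventually.of_forall hZ)]
      simp
    have hXi : gppXi ν V φ lam = 1 := by
      rw [gppXi, ← hlam0]
      norm_num
    rw [hint1, hXi]
    constructor <;> nlinarith
  · -- main case lam > 0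
    have hVol : 0 < (ν V).toReal := ENNReal.toReal_pos hV0 hVtop.ne
    set c := lam * (ν V).toReal with hcdef
    have hc : 0 < c := mul_pos hlam0 hVol
    have he6 : (1:ℝ) ≤ Real.exp 6 := by
      rw [show (1:ℝ) = Real.exp 0 from (Real.exp_zero).symm]
      exact Real.exp_le_exp.2 (by norm_num)
    have hε' : 0 < ε⁻¹ := inv_pos.2 hε
    have hnc : 2 * ε⁻¹ * (Real.exp 6 * c ^ 2) ≤ (n:ℝ) := by
      refine le_trans ?_ hn
      apply mul_le_mul_of_nonneg_left _ (by positivity)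
      have hcc : Real.exp 6 * c ^ 2 = Real.exp 6 * lam ^ 2 * (ν V).toReal ^ 2 := by
        rw [hcdef]; ring
      rw [hcc]
      exact le_max_left _ _
    have hnpos : (0:ℝ) < n := lt_of_lt_of_le (by positivity) hnc
    have hn1 : 1 ≤ n := by
      by_contra h
      push_neg at h
      interval_cases n
      · exact absurd hnpos (by norm_num)
    set a : ℕ → ℝ := fun k => c ^ k / (Nat.factorial k : ℝ) * HcAux.Ik φ μ k with ha
    set r : ℕ → ℝ := fun k => ((n.descFactorial k : ℕ) : ℝ) / (n:ℝ) ^ k with hr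
    have ha_nonneg : ∀ k, 0 ≤ a k := by
      intro k
      rw [ha]
      have := HcAux.Ik_nonneg φ μ k
      positivity
    have ha_le : ∀ k, a k ≤ c ^ k / (Nat.factorial k : ℝ) := by
      intro k
      rw [ha]
      calc c ^ k / (Nat.factorial k : ℝ) * HcAux.Ik φ μ k
          ≤ c ^ k / (Nat.factorial k : ℝ) * 1 :=
            mul_le_mul_of_nonneg_left (HcAux.Ik_le_one hφm hφ0 μ k) (by positivity)
        _ = c ^ k / (Nat.factorial k : ℝ) := mul_one _
    have hsa : Summable a :=
      Summable.of_nonneg_of_le ha_nonneg ha_le (Real.summable_pow_div_factorial c)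
    have hXi : gppXi ν V φ lam = ∑' k, a k := by
      rw [HcAux.gppXi_eq ν V hV0 φ hφm hφ0 lam hlam μ hμ]
    have hr0 : ∀ m, 0 ≤ r m := fun m => HcAux.r_nonneg n m
    have hr1 : ∀ m, r m ≤ 1 := fun m => HcAux.r_le_one n m
    have hra : ∀ m : ℕ, (n.choose m : ℝ) * ((lam * (ν V).toReal / n) ^ m * HcAux.Ik φ μ m)
        = r m * a m := by
      intro m
      rw [hr, ha, ← hcdef]
      have hdesc : ((n.descFactorial m : ℕ) : ℝ) = (m.factorial : ℝ) * (n.choose m : ℝ) := by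
        exact_mod_cast Nat.descFactorial_eq_factorial_mul_choose n m
      simp only []
      rw [hdesc, div_pow]
      have hfm : (m.factorial : ℝ) ≠ 0 := by exact_mod_cast m.factorial_ne_zero
      have hnm : (n:ℝ) ^ m ≠ 0 := by positivity
      field_simp
    have hE : (∫ ω, hcZrand φ (lam * (ν V).toReal / n) ω
        ∂ ((Measure.pi fun _ : Fin n => μ).prod
            (Measure.pi fun _ : Fin n × Fin n => u)))
        = ∑ m ∈ Finset.range (n+1), r m * a m := by
      rw [HcAux.expectation_formula hφm hφ0 μ u hu _ n]
      exact Finset.sum_congr rfl fun m _ => hra m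
    have hsr : Summable (fun m => r m * a m) := by
      apply Summable.of_nonneg_of_le (fun m => mul_nonneg (hr0 m) (ha_nonneg m)) _ hsa
      intro m
      calc r m * a m ≤ 1 * a m := mul_le_mul_of_nonneg_right (hr1 m) (ha_nonneg m)
        _ = a m := one_mul _
    have hE' : (∫ ω, hcZrand φ (lam * (ν V).toReal / n) ω
        ∂ ((Measure.pi fun _ : Fin n => μ).prod
            (Measure.pi fun _ : Fin n × Fin n => u)))
        = ∑' m, r m * a m := by
      rw [hE]
      symm
      apply tsum_eq_sum
      intro m hm
      have hnm : n < m := by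
        have := Finset.mem_range.not.1 hm
        omega
      have hd0 : n.descFactorial m = 0 := Nat.descFactorial_eq_zero_iff_lt.2 hnm
      rw [hr]
      simp [hd0]
    have hupper : (∑' m, r m * a m) ≤ ∑' m, a m := by
      apply Summable.tsum_le_tsum _ hsr hsa
      intro m
      calc r m * a m ≤ 1 * a m := mul_le_mul_of_nonneg_right (hr1 m) (ha_nonneg m)
        _ = a m := one_mul _
    set bb : ℕ → ℝ := fun m => (m:ℝ) * ((m:ℝ) - 1) / (2*(n:ℝ)) * a m with hbb
    have hbb0 : ∀ m, 0 ≤ bb m := by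
      intro m
      rw [hbb]
      apply mul_nonneg _ (ha_nonneg m)
      apply div_nonneg _ (by positivity)
      rcases Nat.eq_zero_or_pos m with h | h
      · simp [h]
      · have : (1:ℝ) ≤ (m:ℝ) := by exact_mod_cast h
        nlinarith
    have hshift : ∀ j : ℕ, bb (j+2) ≤ c^2/(2*(n:ℝ)) * a j := by
      intro j
      have hIk2 : HcAux.Ik φ μ (j+2) ≤ HcAux.Ik φ μ j :=
        le_trans (HcAux.Ik_succ_le hφm hφ0 μ (j+1)) (HcAux.Ik_succ_le hφm hφ0 μ j)
      have hfac : ((j+2).factorial : ℝ) = ((j:ℝ)+2) * ((j:ℝ)+1) * (j.factorial : ℝ) := by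
        rw [Nat.factorial_succ, Nat.factorial_succ]
        push_cast
        ring
      have heq : bb (j+2) = c^2/(2*(n:ℝ)) * (c ^ j / (j.factorial : ℝ) * HcAux.Ik φ μ (j+2)) := by
        rw [hbb, ha]
        simp only []
        rw [hfac]
        have hfm : (j.factorial : ℝ) ≠ 0 := by exact_mod_cast j.factorial_ne_zero
        have h1 : ((j:ℝ)+2) ≠ 0 := by positivity
        have h2 : ((j:ℝ)+1) ≠ 0 := by positivity
        push_cast
        field_simp
        ring
      rw [heq, ha]
      apply mul_le_mul_of_nonneg_left _ (by positivity)
      simp only []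
      apply mul_le_mul_of_nonneg_left hIk2 (by positivity)
    have hsbb2 : Summable (fun j => bb (j+2)) :=
      Summable.of_nonneg_of_le (fun j => hbb0 _) hshift (hsa.mul_left _)
    have hsbb : Summable bb := (summable_nat_add_iff 2).1 hsbb2
    have hsbb1 : Summable (fun j => bb (j+1)) := (summable_nat_add_iff 1).2 hsbb
    have htb : ∑' m, bb m = ∑' j, bb (j+2) := by
      rw [Summable.tsum_eq_zero_add hsbb]
      have hb0 : bb 0 = 0 := by rw [hbb]; simp
      rw [hb0, zero_add, Summable.tsum_eq_zero_add hsbb1]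
      have hb1 : bb 1 = 0 := by rw [hbb]; simp
      rw [hb1, zero_add]
    have hdiffle : (∑' m, a m) - (∑' m, r m * a m) ≤ c^2/(2*(n:ℝ)) * ∑' m, a m := by
      rw [← Summable.tsum_sub hsa hsr]
      calc ∑' m, (a m - r m * a m)
          ≤ ∑' m, bb m := by
            apply Summable.tsum_le_tsum _ (hsa.sub hsr) hsbb
            intro m
            have h1 := HcAux.one_sub_r_le hn1 m
            have h2 : a m - r m * a m = (1 - r m) * a m := by ring
            rw [h2, hbb]
            exact mul_le_mul_of_nonneg_right h1 (ha_nonneg m)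
        _ = ∑' j, bb (j+2) := htb
        _ ≤ ∑' j, c^2/(2*(n:ℝ)) * a j := Summable.tsum_le_tsum hshift hsbb2 (hsa.mul_left _)
        _ = c^2/(2*(n:ℝ)) * ∑' m, a m := tsum_mul_left
    have hXinn : 0 ≤ ∑' m, a m := tsum_nonneg ha_nonneg
    have hcn : c^2/(2*(n:ℝ)) ≤ ε := by
      rw [div_le_iff₀ (by positivity)]
      have h1 : ε * (2 * ε⁻¹ * (Real.exp 6 * c ^ 2)) = 2 * (Real.exp 6 * c ^ 2) := by
        field_simp
      have h2 : ε * (2 * ε⁻¹ * (Real.exp 6 * c ^ 2)) ≤ ε * n :=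
        mul_le_mul_of_nonneg_left hnc hε.le
      rw [h1] at h2
      nlinarith [sq_nonneg c]
    constructor
    · rw [hE', hXi]
      have hfin : c^2/(2*(n:ℝ)) * ∑' m, a m ≤ ε * ∑' m, a m :=
        mul_le_mul_of_nonneg_right hcn hXinn
      linarith
    · rw [hE', hXi]
      exact hupper
end

section
/- With C_φ > 0 the temperedness constant, for all α > 0, q ∈ (0,1], n ≥ 3·max{α⁻¹, α⁻²}·ln(q⁻¹)·Vol/C_φ + 1, and G ~ D_n(V, φ), the maximum degree satisfies Pr[Δ(G) ≥ (1+α)·(n−1)·C_φ/Vol] ≤ q·n. -/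
open MeasureTheory
open ENNReal

open Classical in
/-- Degree of vertex `i` in the random graph determined by the outcome `ω`. -/
noncomputable def degOcc {X : Type*} {n : ℕ} (φ : X → X → ℝ)
    (ω : (Fin n → X) × (Fin n × Fin n → ℝ)) (i : Fin n) : ℕ :=
  (Finset.univ.filter fun j => edgeOcc φ ω i j).card

open Classical in
noncomputable def wProd {X : Type*} {n : ℕ} (φ : X → X → ℝ) (c : ℝ≥0∞)
    (i : Fin n) (ω : (Fin n → X) × (Fin n × Fin n → ℝ)) : ℝ≥0∞ :=
  ∏ j, if edgeOcc φ ω i j then c else 1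

lemma wProd_eq_pow {X : Type*} {n : ℕ} (φ : X → X → ℝ) (c : ℝ≥0∞)
    (i : Fin n) (ω : (Fin n → X) × (Fin n × Fin n → ℝ)) :
    wProd φ c i ω = c ^ degOcc φ ω i := by
  classical
  unfold wProd degOcc
  rw [← Finset.prod_const]
  exact (Finset.prod_filter _ _).symm

theorem lintegral_fin_pi_prod {n : ℕ} {E : Type*} [MeasurableSpace E]
    (μ : Measure E) [SigmaFinite μ] (g : Fin n → E → ℝ≥0∞) (hg : ∀ i, Measurable (g i)) :
    ∫⁻ x : Fin n → E, ∏ i, g i (x i) ∂(Measure.pi fun _ : Fin n => μ)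
      = ∏ i, ∫⁻ t, g i t ∂μ := by
  induction n with
  | zero => simp
  | succ n ih =>
    have hmeas : Measurable fun x : Fin (n+1) → E => ∏ i, g i (x i) :=
      Finset.measurable_prod _ fun i _ => (hg i).comp (measurable_pi_apply i)
    calc
      _ = ∫⁻ x : E × (Fin n → E), g 0 x.1 * ∏ i : Fin n, g i.succ (x.2 i)
            ∂(μ.prod (Measure.pi fun _ : Fin n => μ)) := by
        rw [← ((measurePreserving_piFinSuccAbove (fun _ : Fin (n+1) => μ) 0).symm).lintegral_comp
          hmeas]
        congr 1
        ext z
        simp_rw [MeasurableEquiv.piFinSuccAbove_symm_apply, Fin.insertNthEquiv,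
          Equiv.coe_fn_mk, Fin.insertNth_zero, Fin.prod_univ_succ, Fin.cons_zero, Fin.cons_succ, cast_eq]
      _ = (∫⁻ t, g 0 t ∂μ) * ∫⁻ y : Fin n → E, ∏ i : Fin n, g i.succ (y i)
            ∂(Measure.pi fun _ : Fin n => μ) :=
        lintegral_prod_mul ((hg 0).aemeasurable)
          ((Finset.measurable_prod _ fun (i : Fin n) _ => (hg i.succ).comp (measurable_pi_apply i)).aemeasurable)
      _ = (∫⁻ t, g 0 t ∂μ) * ∏ i : Fin n, ∫⁻ t, g i.succ t ∂μ := by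
        rw [ih (fun i => g i.succ) (fun i => hg i.succ)]
      _ = ∏ i, ∫⁻ t, g i t ∂μ :=
        (Fin.prod_univ_succ fun i => ∫⁻ t, g i t ∂μ).symm

theorem lintegral_pi_prod {ι : Type*} [Fintype ι] {E : Type*} [MeasurableSpace E]
    (μ : Measure E) [SigmaFinite μ] (g : ι → E → ℝ≥0∞) (hg : ∀ i, Measurable (g i)) :
    ∫⁻ x : ι → E, ∏ i, g i (x i) ∂(Measure.pi fun _ : ι => μ)
      = ∏ i, ∫⁻ t, g i t ∂μ := by
  let e := (Fintype.equivFin ι).symm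
  rw [(measurePreserving_piCongrLeft (fun _ : ι => μ) e).lintegral_map_equiv]
  simp only [MeasurableEquiv.coe_piCongrLeft]
  have key : ∀ a : Fin (Fintype.card ι) → E,
      (∏ x : ι, g x ((Equiv.piCongrLeft (fun _ => E) e) a x)) = ∏ j, g (e j) (a j) := by
    intro a
    rw [← e.prod_comp]
    exact Finset.prod_congr rfl fun j _ => by rw [Equiv.piCongrLeft_apply_apply]
  rw [lintegral_congr key, lintegral_fin_pi_prod μ (fun j => g (e j)) (fun j => hg (e j))]
  exact e.prod_comp fun i => ∫⁻ t, g i t ∂μ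

lemma aux_log_lower {x : ℝ} (hx : 0 ≤ x) : 2 * x / (2 + x) ≤ Real.log (1 + x) := by
  set f : ℝ → ℝ := fun t => (2 + t) * Real.log (1 + t) - 2 * t with hf
  have hder : ∀ t : ℝ, 0 ≤ t → HasDerivAt f (Real.log (1 + t) + (2 + t) / (1 + t) - 2) t := by
    intro t ht
    have h1 : (0:ℝ) < 1 + t := by linarith
    have hid : HasDerivAt (fun s : ℝ => 1 + s) 1 t := by
      simpa using (hasDerivAt_id t).const_add (1:ℝ)
    have hlog : HasDerivAt (fun s : ℝ => Real.log (1 + s)) (1 / (1 + t)) t := by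
      simpa [one_div, Function.comp_def] using (Real.hasDerivAt_log h1.ne').comp t hid
    have h2 : HasDerivAt (fun s : ℝ => 2 + s) 1 t := by
      simpa using (hasDerivAt_id t).const_add (2:ℝ)
    have h3 := (h2.mul hlog).sub ((hasDerivAt_id t).const_mul (2:ℝ))
    have h4 : HasDerivAt f (1 * Real.log (1 + t) + (2 + t) * (1 / (1 + t)) - 2 * 1) t := h3
    convert h4 using 1
    ring
  have hlogcont : ContinuousOn (fun t : ℝ => Real.log (1 + t)) (Set.Ici 0) :=
    ContinuousOn.log ((continuous_const.add continuous_id).continuousOn)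
      (fun t ht => by simp only [Set.mem_Ici] at ht; positivity)
  have hcont : ContinuousOn f (Set.Ici (0:ℝ)) :=
    (((continuous_const.add continuous_id).continuousOn.mul hlogcont).sub
      ((continuous_const.mul continuous_id).continuousOn))
  have hmono : MonotoneOn f (Set.Ici (0:ℝ)) := by
    refine monotoneOn_of_deriv_nonneg (convex_Ici 0) hcont ?_ ?_
    · intro t ht
      rw [interior_Ici] at ht
      exact ((hder t (le_of_lt ht)).differentiableAt).differentiableWithinAt
    · intro t ht
      rw [interior_Ici] at ht
      have h1 : (0:ℝ) < 1 + t := by simp only [Set.mem_Ioi] at ht; linarith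
      rw [(hder t (le_of_lt ht)).deriv]
      have hexp := Real.add_one_le_exp (-Real.log (1 + t))
      rw [Real.exp_neg, Real.exp_log h1] at hexp
      have h2 : (2 + t) / (1 + t) = 1 + (1 + t)⁻¹ := by field_simp; ring
      rw [h2]
      linarith
  have h0 : f 0 ≤ f x := hmono (Set.self_mem_Ici) hx hx
  have hfx : f 0 = 0 := by simp [hf]
  rw [hfx] at h0
  rw [div_le_iff₀ (by linarith : (0:ℝ) < 2 + x)]
  simp only [hf] at h0
  nlinarith [h0]

lemma aux_chernoff {α : ℝ} (hα : 0 < α) :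
    min α (α ^ 2) / 3 ≤ (1 + α) * Real.log (1 + α) - α := by
  have h1 : α ^ 2 / (2 + α) ≤ (1 + α) * Real.log (1 + α) - α := by
    have := aux_log_lower hα.le
    have h2 : (0:ℝ) < 2 + α := by linarith
    rw [div_le_iff₀ h2] at *
    nlinarith [mul_le_mul_of_nonneg_left this (by linarith : (0:ℝ) ≤ 1 + α)]
  refine le_trans ?_ h1
  rcases le_total α 1 with h | h
  · have : min α (α ^ 2) = α ^ 2 := min_eq_right (by nlinarith)
    rw [this, div_le_div_iff₀ (by norm_num) (by linarith)]
    nlinarith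
  · have : min α (α ^ 2) = α := min_eq_left (by nlinarith)
    rw [this, div_le_div_iff₀ (by norm_num) (by linarith)]
    nlinarith

lemma aux_uniform {p c : ℝ} (hp0 : 0 ≤ p) (hp1 : p ≤ 1) (hc : 0 ≤ c) :
    ∫⁻ s, (if s ≤ p then ENNReal.ofReal (1 + c) else 1)
        ∂(volume.restrict (Set.Icc (0:ℝ) 1))
      = ENNReal.ofReal (1 + c * p) := by
  have hfun : (fun s : ℝ => if s ≤ p then ENNReal.ofReal (1 + c) else 1)
      = fun s => 1 + (Set.Iic p).indicator (fun _ => ENNReal.ofReal c) s := by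
    ext s
    by_cases h : s ≤ p
    · simp [h, Set.indicator_of_mem (Set.mem_Iic.2 h), ENNReal.ofReal_add zero_le_one hc]
    · simp [h, Set.indicator_of_notMem (fun hs => h (Set.mem_Iic.1 hs))]
  rw [hfun, lintegral_add_right _ (measurable_const.indicator measurableSet_Iic),
    lintegral_indicator measurableSet_Iic, setLIntegral_const, setLIntegral_const,
    Measure.restrict_apply measurableSet_Iic, one_mul]
  have hint : Set.Iic p ∩ Set.Icc (0:ℝ) 1 = Set.Icc 0 p := by
    ext s
    simp only [Set.mem_inter_iff, Set.mem_Iic, Set.mem_Icc]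
    constructor
    · rintro ⟨h1, h2, h3⟩; exact ⟨h2, h1⟩
    · rintro ⟨h1, h2⟩; exact ⟨h2, h1, le_trans h2 hp1⟩
  rw [hint, Real.volume_Icc, Real.volume_Icc]
  simp only [sub_zero]
  rw [← ENNReal.ofReal_mul hc, ← ENNReal.ofReal_add zero_le_one (by positivity)]

lemma aux_pos {X : Type*} [MeasurableSpace X] (ν : Measure X) (V : Set X)
    (hVfin : ν V < ⊤) (hV0 : ν V ≠ 0) (φ : X → X → ℝ)
    (hφm : Measurable (Function.uncurry φ)) (hφ0 : ∀ x y, 0 ≤ φ x y)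
    (Cφ : ℝ) (hCφ : Cφ = ⨆ x : X, ∫ y in V, (1 - Real.exp (-φ x y)) ∂ν)
    (μ : Measure X) (hμ : μ = (ν V)⁻¹ • ν.restrict V) (a : X) :
    ∫⁻ y, ENNReal.ofReal (1 - Real.exp (-φ a y)) ∂μ
      ≤ ENNReal.ofReal (Cφ / (ν V).toReal) := by
  have hVolpos : 0 < (ν V).toReal := ENNReal.toReal_pos hV0 hVfin.ne
  haveI hfin : IsFiniteMeasure (ν.restrict V) := ⟨by rwa [Measure.restrict_apply_univ]⟩
  have hmeas : ∀ x : X, Measurable fun y => 1 - Real.exp (-φ x y) := fun x =>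
    measurable_const.sub (Real.measurable_exp.comp (hφm.of_uncurry_left).neg)
  have hle1 : ∀ x y : X, 1 - Real.exp (-φ x y) ≤ 1 := fun x y => by
    have := Real.exp_pos (-φ x y); linarith
  have h0le : ∀ x y : X, 0 ≤ 1 - Real.exp (-φ x y) := fun x y => by
    have : Real.exp (-φ x y) ≤ 1 := Real.exp_le_one_iff.2 (by simpa using hφ0 x y)
    linarith
  have hint : ∀ x : X, Integrable (fun y => 1 - Real.exp (-φ x y)) (ν.restrict V) := by
    intro x
    refine Integrable.mono' (integrable_const 1) (hmeas x).aestronglyMeasurable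
      (ae_of_all _ fun y => ?_)
    rw [Real.norm_eq_abs, abs_of_nonneg (h0le x y)]
    exact hle1 x y
  have hbdd : BddAbove (Set.range fun x : X => ∫ y in V, (1 - Real.exp (-φ x y)) ∂ν) := by
    refine ⟨(ν V).toReal, ?_⟩
    rintro _ ⟨x, rfl⟩
    calc ∫ y in V, (1 - Real.exp (-φ x y)) ∂ν ≤ ∫ _ in V, (1:ℝ) ∂ν :=
          integral_mono (hint x) (integrable_const 1) (fun y => hle1 x y)
      _ = (ν V).toReal := by
          rw [integral_const, measureReal_def, Measure.restrict_apply_univ, smul_eq_mul, mul_one]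
  have hsup : ∫ y in V, (1 - Real.exp (-φ a y)) ∂ν ≤ Cφ := hCφ ▸ le_ciSup hbdd a
  rw [hμ, lintegral_smul_measure]
  have heq : ∫⁻ y in V, ENNReal.ofReal (1 - Real.exp (-φ a y)) ∂ν
      = ENNReal.ofReal (∫ y in V, (1 - Real.exp (-φ a y)) ∂ν) :=
    (ofReal_integral_eq_lintegral_ofReal (hint a) (ae_of_all _ fun y => h0le a y)).symm
  rw [heq]
  calc (ν V)⁻¹ * ENNReal.ofReal (∫ y in V, (1 - Real.exp (-φ a y)) ∂ν)
      ≤ (ν V)⁻¹ * ENNReal.ofReal Cφ := mul_le_mul_right (ENNReal.ofReal_le_ofReal hsup) _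
    _ = ENNReal.ofReal (Cφ / (ν V).toReal) := by
        conv_lhs => rw [← ENNReal.ofReal_toReal hVfin.ne]
        rw [← ENNReal.ofReal_inv_of_pos hVolpos,
          ← ENNReal.ofReal_mul (by positivity), inv_mul_eq_div]

open Classical in
lemma aux_inner {X : Type*} [MeasurableSpace X] (φ : X → X → ℝ) (hφ0 : ∀ x y, 0 ≤ φ x y)
    (hφsym : ∀ x y, φ x y = φ y x) (α : ℝ) (hα : 0 < α)
    (u : Measure ℝ) [IsProbabilityMeasure u] (hu : u = volume.restrict (Set.Icc (0:ℝ) 1))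
    {m : ℕ} (i : Fin (m+1)) (x : Fin (m+1) → X) :
    ∫⁻ y : Fin (m+1) × Fin (m+1) → ℝ,
        (∏ j, if edgeOcc φ (x, y) i j then ENNReal.ofReal (1+α) else 1)
        ∂(Measure.pi fun _ : Fin (m+1) × Fin (m+1) => u)
      = ∏ j, (if j = i then 1
          else ENNReal.ofReal (1 + α * (1 - Real.exp (-φ (x i) (x j))))) := by
  set c := ENNReal.ofReal (1 + α) with hc
  set G : Fin (m+1) × Fin (m+1) → ℝ → ℝ≥0∞ := fun k s =>
    if k.1 = i ∧ i < k.2 then (if s ≤ 1 - Real.exp (-φ (x i) (x k.2)) then c else 1)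
    else if k.2 = i ∧ k.1 < i then (if s ≤ 1 - Real.exp (-φ (x i) (x k.1)) then c else 1)
    else 1 with hG
  set e : Fin (m+1) → Fin (m+1) × Fin (m+1) := fun j => if i < j then (i, j) else (j, i)
    with he
  have hGval1 : ∀ j : Fin (m+1), i < j →
      G (i, j) = fun s => if s ≤ 1 - Real.exp (-φ (x i) (x j)) then c else 1 := by
    intro j hj
    funext s
    exact if_pos ⟨rfl, hj⟩
  have hGval2 : ∀ j : Fin (m+1), j < i →
      G (j, i) = fun s => if s ≤ 1 - Real.exp (-φ (x i) (x j)) then c else 1 := by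
    intro j hj
    funext s
    exact (if_neg (fun hh => absurd hh.2 (lt_irrefl i))).trans (if_pos ⟨rfl, hj⟩)
  have hGval3 : G (i, i) = fun _ => (1:ℝ≥0∞) := by
    funext s
    exact (if_neg (fun hh => absurd hh.2 (lt_irrefl i))).trans
      (if_neg (fun hh => absurd hh.2 (lt_irrefl i)))
  have heinj : Function.Injective e := by
    intro a b hab
    simp only [he] at hab
    split_ifs at hab with h1 h2 h2 <;> simp only [Prod.mk.injEq] at hab
    · exact hab.2
    · rw [hab.2] at h1
      exact absurd h1 (lt_irrefl i)
    · rw [← hab.2] at h2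
      exact absurd h2 (lt_irrefl i)
    · exact hab.1
  have hp01 : ∀ z w : X, 0 ≤ 1 - Real.exp (-φ z w) ∧ 1 - Real.exp (-φ z w) ≤ 1 := by
    intro z w
    have h1 : Real.exp (-φ z w) ≤ 1 := Real.exp_le_one_iff.2 (by simpa using hφ0 z w)
    have h2 := Real.exp_pos (-φ z w)
    constructor <;> linarith
  have hGmeas : ∀ k, Measurable (G k) := by
    intro k
    by_cases h1 : k.1 = i ∧ i < k.2
    · have : G k = fun s => if s ≤ 1 - Real.exp (-φ (x i) (x k.2)) then c else 1 :=
        funext fun s => if_pos h1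
      rw [this]
      exact Measurable.ite measurableSet_Iic measurable_const measurable_const
    · by_cases h2 : k.2 = i ∧ k.1 < i
      · have : G k = fun s => if s ≤ 1 - Real.exp (-φ (x i) (x k.1)) then c else 1 :=
          funext fun s => (if_neg h1).trans (if_pos h2)
        rw [this]
        exact Measurable.ite measurableSet_Iic measurable_const measurable_const
      · have : G k = fun _ => 1 := funext fun s => (if_neg h1).trans (if_neg h2)
        rw [this]
        exact measurable_const
  have htrivial : ∀ k : Fin (m+1) × Fin (m+1), k ∉ Finset.univ.image e →
      G k = fun _ => 1 := by
    intro k hk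
    have hA : ¬(k.1 = i ∧ i < k.2) := by
      rintro ⟨h1, h2⟩
      apply hk
      refine Finset.mem_image.2 ⟨k.2, Finset.mem_univ _, ?_⟩
      simp only [he]
      rw [if_pos h2]
      exact Prod.ext h1.symm rfl
    have hB : ¬(k.2 = i ∧ k.1 < i) := by
      rintro ⟨h1, h2⟩
      apply hk
      refine Finset.mem_image.2 ⟨k.1, Finset.mem_univ _, ?_⟩
      simp only [he]
      rw [if_neg (asymm h2)]
      exact Prod.ext rfl h1.symm
    exact funext fun s => (if_neg hA).trans (if_neg hB)
  have hkey : ∀ y : Fin (m+1) × Fin (m+1) → ℝ,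
      (∏ j, if edgeOcc φ (x, y) i j then c else 1) = ∏ k, G k (y k) := by
    intro y
    have h1 : ∏ k, G k (y k) = ∏ k ∈ Finset.univ.image e, G k (y k) :=
      (Finset.prod_subset (Finset.subset_univ _)
        (fun k _ hk => by rw [htrivial k hk])).symm
    have h2 : ∏ k ∈ Finset.univ.image e, G k (y k) = ∏ j, G (e j) (y (e j)) :=
      Finset.prod_image (fun a _ b _ hab => heinj hab)
    rw [h1, h2]
    refine Finset.prod_congr rfl fun j _ => ?_
    rcases lt_trichotomy i j with h | h | h
    · have hej : e j = (i, j) := if_pos h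
      rw [hej, hGval1 j h]
      exact if_congr (by simp [edgeOcc, h, lt_asymm h]) rfl rfl
    · subst h
      have hej : e i = (i, i) := if_neg (lt_irrefl i)
      rw [hej, hGval3]
      simp [edgeOcc]
    · have hej : e j = (j, i) := if_neg (asymm h)
      rw [hej, hGval2 j h]
      exact if_congr (by simp [edgeOcc, h, lt_asymm h, hφsym (x j) (x i)]) rfl rfl
  rw [lintegral_congr hkey, lintegral_pi_prod u G hGmeas]
  have h1 : ∏ k, ∫⁻ s, G k s ∂u = ∏ k ∈ Finset.univ.image e, ∫⁻ s, G k s ∂u :=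
    (Finset.prod_subset (Finset.subset_univ _)
      (fun k _ hk => by rw [htrivial k hk]; simp)).symm
  rw [h1, Finset.prod_image (fun a _ b _ hab => heinj hab)]
  refine Finset.prod_congr rfl fun j _ => ?_
  rcases lt_trichotomy i j with h | h | h
  · have hej : e j = (i, j) := if_pos h
    rw [hej, if_neg (h.ne' : j ≠ i), hGval1 j h, hu]
    exact aux_uniform (hp01 (x i) (x j)).1 (hp01 (x i) (x j)).2 hα.le
  · subst h
    have hej : e i = (i, i) := if_neg (lt_irrefl i)
    rw [hej, if_pos rfl, hGval3]
    simp
  · have hej : e j = (j, i) := if_neg (asymm h)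
    rw [hej, if_neg (h.ne : j ≠ i), hGval2 j h, hu]
    exact aux_uniform (hp01 (x i) (x j)).1 (hp01 (x i) (x j)).2 hα.le

open Classical in
lemma aux_fmeas {X : Type*} [MeasurableSpace X] (φ : X → X → ℝ)
    (hφm : Measurable (Function.uncurry φ)) {n : ℕ} (i : Fin n) (c : ℝ≥0∞) :
    Measurable (wProd φ c i) := by
  unfold wProd
  apply Finset.measurable_prod
  intro j _
  have hA : ∀ (a b : Fin n), Measurable fun ω : (Fin n → X) × (Fin n × Fin n → ℝ) =>
      1 - Real.exp (-φ (ω.1 a) (ω.1 b)) := by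
    intro a b
    have hc : Measurable fun ω : (Fin n → X) × (Fin n × Fin n → ℝ) =>
        φ (ω.1 a) (ω.1 b) := by
      have hpair : Measurable fun ω : (Fin n → X) × (Fin n × Fin n → ℝ) =>
          ((ω.1 a, ω.1 b) : X × X) :=
        (((measurable_pi_apply a).comp measurable_fst).prodMk
          ((measurable_pi_apply b).comp measurable_fst))
      exact hφm.comp hpair
    exact measurable_const.sub (Real.measurable_exp.comp hc.neg)
  have hU : ∀ (a b : Fin n), Measurable fun ω : (Fin n → X) × (Fin n × Fin n → ℝ) =>
      ω.2 (a, b) := fun a b => (measurable_pi_apply (a, b)).comp measurable_snd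
  have hset : MeasurableSet {ω : (Fin n → X) × (Fin n × Fin n → ℝ) | edgeOcc φ ω i j} :=
    ((MeasurableSet.const _).inter (measurableSet_le (hU i j) (hA i j))).union
      ((MeasurableSet.const _).inter (measurableSet_le (hU j i) (hA j i)))
  exact Measurable.ite hset measurable_const measurable_const


open Classical in
lemma aux_core {X : Type*} [MeasurableSpace X] (ν : Measure X) (V : Set X)
    (hVfin : ν V < ⊤) (hV0 : ν V ≠ 0)
    (φ : X → X → ℝ) (hφm : Measurable (Function.uncurry φ)) (hφ0 : ∀ x y, 0 ≤ φ x y)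
    (hφsym : ∀ x y, φ x y = φ y x)
    (μ : Measure X) [IsProbabilityMeasure μ] (hμ : μ = (ν V)⁻¹ • ν.restrict V)
    (u : Measure ℝ) [IsProbabilityMeasure u] (hu : u = volume.restrict (Set.Icc (0:ℝ) 1))
    (Cφ : ℝ) (hCφ : Cφ = ⨆ x : X, ∫ y in V, (1 - Real.exp (-φ x y)) ∂ν)
    (hCφpos : 0 < Cφ) (α : ℝ) (hα : 0 < α) (m : ℕ) (i : Fin (m+1)) :
    ∫⁻ ω, wProd φ (ENNReal.ofReal (1+α)) i ω
        ∂((Measure.pi fun _ : Fin (m+1) => μ).prod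
          (Measure.pi fun _ : Fin (m+1) × Fin (m+1) => u))
      ≤ ENNReal.ofReal (Real.exp (α * m * Cφ / (ν V).toReal)) := by
  have hfmeas := aux_fmeas φ hφm i (ENNReal.ofReal (1+α))
  unfold wProd at hfmeas ⊢
  rw [lintegral_prod _ hfmeas.aemeasurable]
  rw [lintegral_congr fun x => aux_inner φ hφ0 hφsym α hα u hu i x]
  -- now: ∫⁻ x, ∏ j, (if j = i then 1 else ofReal (1 + α * (1 - exp (-φ (x i) (x j))))) ∂pi
  set F : (Fin (m+1) → X) → ℝ≥0∞ := fun x => ∏ j, (if j = i then 1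
      else ENNReal.ofReal (1 + α * (1 - Real.exp (-φ (x i) (x j))))) with hF
  have hφab : ∀ (a b : Fin (m+1)), Measurable fun x : Fin (m+1) → X =>
      ENNReal.ofReal (1 + α * (1 - Real.exp (-φ (x a) (x b)))) := by
    intro a b
    have hc : Measurable fun x : Fin (m+1) → X => φ (x a) (x b) := by
      have hpair : Measurable fun x : Fin (m+1) → X => ((x a, x b) : X × X) :=
        (measurable_pi_apply a).prodMk (measurable_pi_apply b)
      exact hφm.comp hpair
    exact ENNReal.measurable_ofReal.comp (measurable_const.add (measurable_const.mul
      (measurable_const.sub (Real.measurable_exp.comp hc.neg))))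
  have hFmeas : Measurable F := by
    apply Finset.measurable_prod
    intro j _
    by_cases hj : j = i
    · simp only [if_pos hj]; exact measurable_const
    · simp only [if_neg hj]; exact hφab i j
  have hsplit := measurePreserving_piFinSuccAbove (fun _ : Fin (m+1) => μ) i
  rw [← (hsplit.symm (MeasurableEquiv.piFinSuccAbove (fun _ : Fin (m+1) => X) i)).lintegral_comp
    hFmeas]
  have hcompmeas : Measurable fun z : X × (Fin m → X) =>
      F ((MeasurableEquiv.piFinSuccAbove (fun _ : Fin (m+1) => X) i).symm z) :=
    hFmeas.comp' (MeasurableEquiv.measurable _)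
  rw [lintegral_prod _ hcompmeas.aemeasurable]
  set H : X → X → ℝ≥0∞ := fun a y => ENNReal.ofReal (1 + α * (1 - Real.exp (-φ a y))) with hH
  have hHmeas : ∀ a, Measurable (H a) := by
    intro a
    have hc : Measurable fun y : X => φ a y := hφm.of_uncurry_left
    exact ENNReal.measurable_ofReal.comp (measurable_const.add (measurable_const.mul
      (measurable_const.sub (Real.measurable_exp.comp hc.neg))))
  have hFeq : ∀ (a : X) (b : Fin m → X),
      F ((MeasurableEquiv.piFinSuccAbove (fun _ : Fin (m+1) => X) i).symm (a, b))
        = ∏ l : Fin m, H a (b l) := by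
    intro a b
    have hins : (MeasurableEquiv.piFinSuccAbove (fun _ : Fin (m+1) => X) i).symm (a, b)
        = i.insertNth a b := by
      simp [MeasurableEquiv.piFinSuccAbove_symm_apply, Fin.insertNthEquiv]
    rw [hins]
    simp only [hF]
    rw [Fin.prod_univ_succAbove _ i, if_pos rfl, one_mul]
    refine Finset.prod_congr rfl fun l _ => ?_
    rw [if_neg (Fin.succAbove_ne i l), Fin.insertNth_apply_same,
      Fin.insertNth_apply_succAbove]
  rw [lintegral_congr fun a => lintegral_congr fun b => hFeq a b]
  have hinner : ∀ a : X, ∫⁻ b : Fin m → X, ∏ l : Fin m, H a (b l)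
      ∂(Measure.pi fun _ : Fin m => μ) = (∫⁻ y, H a y ∂μ) ^ m := by
    intro a
    rw [lintegral_pi_prod μ (fun _ => H a) (fun _ => hHmeas a), Finset.prod_const,
      Finset.card_univ, Fintype.card_fin]
  rw [lintegral_congr hinner]
  have hone : ∀ a : X, ∫⁻ y, H a y ∂μ
      ≤ ENNReal.ofReal (Real.exp (α * Cφ / (ν V).toReal)) := by
    intro a
    have h0le : ∀ y, 0 ≤ 1 - Real.exp (-φ a y) := by
      intro y
      have : Real.exp (-φ a y) ≤ 1 := Real.exp_le_one_iff.2 (by simpa using hφ0 a y)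
      linarith
    have hHsplit : H a = fun y =>
        1 + ENNReal.ofReal α * ENNReal.ofReal (1 - Real.exp (-φ a y)) := by
      funext y
      rw [hH]
      simp only
      rw [ENNReal.ofReal_add zero_le_one (mul_nonneg hα.le (h0le y)), ENNReal.ofReal_one,
        ENNReal.ofReal_mul hα.le]
    have hmeas2 : Measurable fun y : X => ENNReal.ofReal (1 - Real.exp (-φ a y)) := by
      have hc : Measurable fun y : X => φ a y := hφm.of_uncurry_left
      exact ENNReal.measurable_ofReal.comp (measurable_const.sub
        (Real.measurable_exp.comp hc.neg))
    rw [hHsplit, lintegral_add_left measurable_const, lintegral_const_mul _ hmeas2,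
      lintegral_const, measure_univ, mul_one]
    calc (1:ℝ≥0∞) + ENNReal.ofReal α * ∫⁻ y, ENNReal.ofReal (1 - Real.exp (-φ a y)) ∂μ
        ≤ 1 + ENNReal.ofReal α * ENNReal.ofReal (Cφ / (ν V).toReal) :=
          add_le_add_right (mul_le_mul_right
            (aux_pos ν V hVfin hV0 φ hφm hφ0 Cφ hCφ μ hμ a) _) 1
      _ = ENNReal.ofReal (1 + α * (Cφ / (ν V).toReal)) := by
          have h1 : 0 ≤ Cφ / (ν V).toReal := div_nonneg hCφpos.le ENNReal.toReal_nonneg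
          rw [ENNReal.ofReal_add zero_le_one (mul_nonneg hα.le h1), ENNReal.ofReal_one,
            ENNReal.ofReal_mul hα.le]
      _ ≤ ENNReal.ofReal (Real.exp (α * Cφ / (ν V).toReal)) := by
          apply ENNReal.ofReal_le_ofReal
          have := Real.add_one_le_exp (α * (Cφ / (ν V).toReal))
          rw [mul_div_assoc]
          linarith
  calc ∫⁻ a, (∫⁻ y, H a y ∂μ) ^ m ∂μ
      ≤ ∫⁻ _, ENNReal.ofReal (Real.exp (α * Cφ / (ν V).toReal)) ^ m ∂μ :=
        lintegral_mono fun a => pow_le_pow_left' (hone a) m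
    _ = ENNReal.ofReal (Real.exp (α * Cφ / (ν V).toReal)) ^ m := by
        rw [lintegral_const, measure_univ, mul_one]
    _ = ENNReal.ofReal (Real.exp (α * Cφ / (ν V).toReal) ^ m) :=
        (ENNReal.ofReal_pow (Real.exp_pos _).le m).symm
    _ = ENNReal.ofReal (Real.exp (α * ↑m * Cφ / (ν V).toReal)) := by
        rw [← Real.exp_nat_mul]
        congr 1
        ring

/-- Maximum-degree bound for `G ~ D_n(V, φ)`: for
`n ≥ 3 max{α⁻¹, α⁻²} ln(q⁻¹) Vol / C_φ + 1`, the probability that the maximum degree is at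
least `(1+α)(n−1) C_φ / Vol` is at most `q n`, where `C_φ` is the temperedness constant. -/
theorem max_degree_bound {X : Type*} [MeasurableSpace X]
    (ν : Measure X) (V : Set X) (hV : MeasurableSet V)
    [Fact (ν V < ⊤)] (hV0 : ν V ≠ 0)
    (φ : X → X → ℝ) (hφm : Measurable (Function.uncurry φ))
    (hφ0 : ∀ x y, 0 ≤ φ x y) (hφsym : ∀ x y, φ x y = φ y x)
    (μ : Measure X) [IsProbabilityMeasure μ] (hμ : μ = (ν V)⁻¹ • ν.restrict V)
    (u : Measure ℝ) [IsProbabilityMeasure u] (hu : u = volume.restrict (Set.Icc (0:ℝ) 1))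
    (Cφ : ℝ) (hCφ : Cφ = ⨆ x : X, ∫ y in V, (1 - Real.exp (-φ x y)) ∂ν)
    (hCφpos : 0 < Cφ)
    (α q : ℝ) (hα : 0 < α) (hq : 0 < q) (hq1 : q ≤ 1)
    (n : ℕ)
    (hn : 3 * max α⁻¹ (α ^ 2)⁻¹ * Real.log q⁻¹ * (ν V).toReal / Cφ + 1 ≤ (n : ℝ)) :
    ((Measure.pi fun _ : Fin n => μ).prod (Measure.pi fun _ : Fin n × Fin n => u))
      {ω | ∃ i : Fin n, (1 + α) * ((n : ℝ) - 1) * Cφ / (ν V).toReal ≤ (degOcc φ ω i : ℝ)}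
      ≤ ENNReal.ofReal (q * n) := by
  have hVfin : ν V < ⊤ := Fact.out
  have hVolpos : 0 < (ν V).toReal := ENNReal.toReal_pos hV0 hVfin.ne
  have hL : 0 ≤ Real.log q⁻¹ := by
    rw [Real.log_inv]
    linarith [Real.log_nonpos hq.le hq1]
  have hmax : 0 ≤ max α⁻¹ (α ^ 2)⁻¹ := le_max_iff.2 (Or.inl (by positivity))
  have hden : 0 ≤ 3 * max α⁻¹ (α ^ 2)⁻¹ * Real.log q⁻¹ * (ν V).toReal / Cφ :=
    div_nonneg (mul_nonneg (mul_nonneg (by linarith) hL) ENNReal.toReal_nonneg) hCφpos.le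
  have hn1 : 1 ≤ n := by
    have h1 : (1:ℝ) ≤ (n:ℝ) := by linarith
    exact_mod_cast h1
  obtain ⟨m, rfl⟩ : ∃ m, n = m + 1 := ⟨n - 1, by omega⟩
  push_cast at hn
  set tR := (1 + α) * ((↑(m+1) : ℝ) - 1) * Cφ / (ν V).toReal with htR
  have htR' : tR = (1 + α) * ((m:ℝ) * Cφ / (ν V).toReal) := by
    rw [htR]
    push_cast
    ring
  set B := (m:ℝ) * Cφ / (ν V).toReal with hB
  have hBnn : 0 ≤ B := by positivity
  have hBlower : 3 * max α⁻¹ (α ^ 2)⁻¹ * Real.log q⁻¹ ≤ B := by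
    rw [hB, le_div_iff₀ hVolpos]
    have h1 : 3 * max α⁻¹ (α ^ 2)⁻¹ * Real.log q⁻¹ * (ν V).toReal / Cφ ≤ (m:ℝ) := by
      linarith
    exact (div_le_iff₀ hCφpos).1 h1
  have hmn : 0 ≤ min α (α ^ 2) := le_min hα.le (by positivity)
  have hmaxmin : max α⁻¹ (α ^ 2)⁻¹ * min α (α ^ 2) = 1 := by
    rcases le_total α 1 with h | h
    · have h2 : α ^ 2 ≤ α := by nlinarith
      rw [min_eq_right h2, max_eq_right (by
        apply inv_anti₀ (by positivity) h2)]
      exact inv_mul_cancel₀ (by positivity)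
    · have h2 : α ≤ α ^ 2 := by nlinarith
      rw [min_eq_left h2, max_eq_left (inv_anti₀ hα h2)]
      exact inv_mul_cancel₀ hα.ne'
  have hchain : Real.log q⁻¹ ≤ B * ((1 + α) * Real.log (1 + α) - α) := by
    have c2 : Real.log q⁻¹ ≤ B * (min α (α ^ 2) / 3) := by
      calc Real.log q⁻¹ = (max α⁻¹ (α ^ 2)⁻¹ * min α (α ^ 2)) * Real.log q⁻¹ := by
            rw [hmaxmin, one_mul]
        _ = 3 * max α⁻¹ (α ^ 2)⁻¹ * Real.log q⁻¹ * (min α (α ^ 2) / 3) := by ring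
        _ ≤ B * (min α (α ^ 2) / 3) :=
            mul_le_mul_of_nonneg_right hBlower (by linarith)
    calc Real.log q⁻¹ ≤ B * (min α (α ^ 2) / 3) := c2
      _ ≤ B * ((1 + α) * Real.log (1 + α) - α) :=
          mul_le_mul_of_nonneg_left (aux_chernoff hα) hBnn
  have hreal : Real.exp (α * m * Cφ / (ν V).toReal) ≤ q * (1 + α) ^ tR := by
    have hαB : α * (m:ℝ) * Cφ / (ν V).toReal = α * B := by rw [hB]; ring
    rw [hαB, htR', Real.rpow_def_of_pos (by linarith : (0:ℝ) < 1 + α)]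
    nth_rewrite 1 [show q = Real.exp (Real.log q) from (Real.exp_log hq).symm]
    rw [← Real.exp_add]
    apply Real.exp_le_exp.2
    have hlogq : Real.log q = -Real.log q⁻¹ := by rw [Real.log_inv]; ring
    rw [hlogq]
    have expand : B * ((1 + α) * Real.log (1 + α) - α)
        = Real.log (1 + α) * ((1 + α) * B) - α * B := by ring
    rw [expand] at hchain
    linarith
  have key : ∀ i : Fin (m+1),
      ((Measure.pi fun _ : Fin (m+1) => μ).prod
        (Measure.pi fun _ : Fin (m+1) × Fin (m+1) => u))
        {ω | tR ≤ (degOcc φ ω i : ℝ)} ≤ ENNReal.ofReal q := by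
    intro i
    have hfmeas := aux_fmeas φ hφm i (ENNReal.ofReal (1 + α))
    have hone_le : (1:ℝ) ≤ 1 + α := by linarith
    have hsub : {ω : (Fin (m+1) → X) × (Fin (m+1) × Fin (m+1) → ℝ) |
        tR ≤ (degOcc φ ω i : ℝ)} ⊆
        {ω | ENNReal.ofReal ((1 + α) ^ tR)
          ≤ wProd φ (ENNReal.ofReal (1 + α)) i ω} := by
      intro ω hω
      simp only [Set.mem_setOf_eq] at hω ⊢
      rw [wProd_eq_pow]
      calc ENNReal.ofReal ((1 + α) ^ tR)
          ≤ ENNReal.ofReal ((1 + α) ^ ((degOcc φ ω i : ℕ) : ℝ)) :=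
            ENNReal.ofReal_le_ofReal
              (Real.rpow_le_rpow_of_exponent_le hone_le hω)
        _ = ENNReal.ofReal ((1 + α) ^ (degOcc φ ω i)) := by rw [Real.rpow_natCast]
        _ = ENNReal.ofReal (1 + α) ^ (degOcc φ ω i) := ENNReal.ofReal_pow (by linarith) _
    have hcore := aux_core ν V hVfin hV0 φ hφm hφ0 hφsym μ hμ u hu Cφ hCφ hCφpos α hα m i
    have hmar := mul_meas_ge_le_lintegral₀
      (μ := (Measure.pi fun _ : Fin (m+1) => μ).prod
        (Measure.pi fun _ : Fin (m+1) × Fin (m+1) => u))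
      hfmeas.aemeasurable (ENNReal.ofReal ((1 + α) ^ tR))
    have hT0 : ENNReal.ofReal ((1 + α) ^ tR) ≠ 0 :=
      (ENNReal.ofReal_pos.2 (Real.rpow_pos_of_pos (by linarith) _)).ne'
    have hTtop : ENNReal.ofReal ((1 + α) ^ tR) ≠ ⊤ := ENNReal.ofReal_ne_top
    refine le_trans (measure_mono hsub) ?_
    rw [← ENNReal.mul_le_mul_iff_right hT0 hTtop]
    refine le_trans hmar (le_trans hcore (le_trans (ENNReal.ofReal_le_ofReal hreal)
      (le_of_eq ?_)))
    rw [ENNReal.ofReal_mul hq.le, mul_comm]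
  have hset : {ω : (Fin (m+1) → X) × (Fin (m+1) × Fin (m+1) → ℝ) |
      ∃ i : Fin (m+1), tR ≤ (degOcc φ ω i : ℝ)}
      = ⋃ i : Fin (m+1), {ω | tR ≤ (degOcc φ ω i : ℝ)} := Set.setOf_exists _
  rw [hset]
  refine le_trans (measure_iUnion_le _) ?_
  rw [tsum_fintype]
  refine le_trans (Finset.sum_le_sum fun i _ => key i) ?_
  rw [Finset.sum_const, Finset.card_univ, Fintype.card_fin, nsmul_eq_mul,
    ENNReal.ofReal_mul hq.le, ENNReal.ofReal_natCast, mul_comm]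
end

section
/- For the hard-core partition function on a finite graph G and activities λ(n) = λVol/n and λ(n−k) = λVol/(n−k) with k ≤ εn/(40λVol + ε), it holds that e^{−ε/40} Z_{G'}(λ(n−k)) ≤ Z_G(λ(n)) ≤ e^{ε/40} Z_{G'}(λ(n−k)) whenever G is a graph on [n] in which [k] is an independent set, and G' is the induced subgraph of G on the remaining n−k vertices. -/
open Classical in
/-- Hard-core partition function of a finite graph `G` at activity `z`. -/
noncomputable def hcZ {V : Type*} [Fintype V] (G : SimpleGraph V) (z : ℝ) : ℝ :=
  ∑ I : Finset V, if ∀ i ∈ I, ∀ j ∈ I, ¬ G.Adj i j then z ^ I.card else 0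

open Classical

lemma sum_pow_card' {α : Type*} (s : Finset α) (z : ℝ) :
    ∑ t ∈ s.powerset, z ^ t.card = (z + 1) ^ s.card := by
  have h := Finset.prod_add (fun _ : α => z) (fun _ => 1) s
  simp only [Finset.prod_const, one_pow, mul_one] at h
  exact h.symm

lemma hcZ_nonneg {V : Type*} [Fintype V] (G : SimpleGraph V) {z : ℝ} (hz : 0 ≤ z) :
    0 ≤ hcZ G z := by
  unfold hcZ
  refine Finset.sum_nonneg fun I _ => ?_
  split
  · positivity
  · exact le_refl 0

lemma hcZ_mono {V : Type*} [Fintype V] (G : SimpleGraph V) {z z' : ℝ} (hz : 0 ≤ z)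
    (h : z ≤ z') : hcZ G z ≤ hcZ G z' := by
  unfold hcZ
  refine Finset.sum_le_sum fun I _ => ?_
  split
  · exact pow_le_pow_left₀ hz h _
  · exact le_refl 0

lemma hcZ_zero {V : Type*} [Fintype V] (G : SimpleGraph V) : hcZ G 0 = 1 := by
  unfold hcZ
  rw [Finset.sum_eq_single (∅ : Finset V)]
  · simp
  · intro I _ hI
    have hc : I.card ≠ 0 := by simpa [Finset.card_eq_zero] using hI
    split <;> simp [zero_pow hc]
  · intro h
    exact absurd (Finset.mem_univ _) h

lemma hcZ_eq_filter {V : Type*} [Fintype V] (G : SimpleGraph V) (z : ℝ) :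
    hcZ G z = ∑ I ∈ Finset.univ.filter (fun I : Finset V => ∀ i ∈ I, ∀ j ∈ I, ¬ G.Adj i j),
      z ^ I.card := by
  rw [Finset.sum_filter]; rfl

lemma hcZ_add_le {V : Type*} [Fintype V] (G : SimpleGraph V) {z d : ℝ} (hz : 0 ≤ z)
    (hd : 0 ≤ d) : hcZ G (z + d) ≤ (1 + d) ^ Fintype.card V * hcZ G z := by
  have expand : ∀ I : Finset V,
      (if ∀ i ∈ I, ∀ j ∈ I, ¬ G.Adj i j then (z + d) ^ I.card else 0)
      = ∑ t : Finset V, (if (∀ i ∈ I, ∀ j ∈ I, ¬ G.Adj i j) ∧ t ⊆ I then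
          d ^ t.card * z ^ (I \ t).card else 0) := by
    intro I
    by_cases hI : ∀ i ∈ I, ∀ j ∈ I, ¬ G.Adj i j
    · simp only [eq_true hI, if_true, true_and]
      have h := Finset.prod_add (fun _ : V => d) (fun _ => z) I
      simp only [Finset.prod_const] at h
      rw [add_comm z d, h, ← Finset.sum_filter]
      congr 1
      ext t
      simp [Finset.mem_powerset]
    · simp [hI]
  have step1 : hcZ G (z + d) = ∑ t : Finset V, ∑ I : Finset V,
      (if (∀ i ∈ I, ∀ j ∈ I, ¬ G.Adj i j) ∧ t ⊆ I then
        d ^ t.card * z ^ (I \ t).card else 0) := by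
    rw [hcZ, Finset.sum_congr rfl (fun I _ => expand I), Finset.sum_comm]
  rw [step1]
  have inner : ∀ t : Finset V, (∑ I : Finset V,
      (if (∀ i ∈ I, ∀ j ∈ I, ¬ G.Adj i j) ∧ t ⊆ I then
        d ^ t.card * z ^ (I \ t).card else 0)) ≤ d ^ t.card * hcZ G z := by
    intro t
    have h1 : (∑ I : Finset V,
        (if (∀ i ∈ I, ∀ j ∈ I, ¬ G.Adj i j) ∧ t ⊆ I then
          d ^ t.card * z ^ (I \ t).card else 0))
        = d ^ t.card * ∑ I ∈ Finset.univ.filter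
            (fun I : Finset V => (∀ i ∈ I, ∀ j ∈ I, ¬ G.Adj i j) ∧ t ⊆ I),
            z ^ (I \ t).card := by
      rw [Finset.sum_filter, Finset.mul_sum]
      refine Finset.sum_congr rfl fun I _ => ?_
      split <;> simp
    rw [h1]
    refine mul_le_mul_of_nonneg_left ?_ (pow_nonneg hd _)
    set S := Finset.univ.filter
        (fun I : Finset V => (∀ i ∈ I, ∀ j ∈ I, ¬ G.Adj i j) ∧ t ⊆ I) with hS
    have hinj : ∀ I ∈ S, ∀ I' ∈ S, I \ t = I' \ t → I = I' := by
      intro I hI I' hI' h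
      simp only [hS, Finset.mem_filter] at hI hI'
      ext a
      by_cases ha : a ∈ t
      · simp [hI.2.2 ha, hI'.2.2 ha]
      · constructor
        · intro haI
          have : a ∈ I \ t := Finset.mem_sdiff.mpr ⟨haI, ha⟩
          rw [h] at this
          exact (Finset.mem_sdiff.mp this).1
        · intro haI
          have : a ∈ I' \ t := Finset.mem_sdiff.mpr ⟨haI, ha⟩
          rw [← h] at this
          exact (Finset.mem_sdiff.mp this).1
    have h2 : (∑ I ∈ S, z ^ (I \ t).card)
        = ∑ J ∈ S.image (· \ t), z ^ J.card :=
      (Finset.sum_image (f := fun J : Finset V => z ^ J.card) hinj).symm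
    rw [h2, hcZ_eq_filter]
    refine Finset.sum_le_sum_of_subset_of_nonneg ?_ (fun J _ _ => pow_nonneg hz _)
    intro J hJ
    simp only [Finset.mem_image] at hJ
    obtain ⟨I, hI, rfl⟩ := hJ
    simp only [hS, Finset.mem_filter, Finset.mem_univ, true_and] at hI ⊢
    intro i hi j hj
    exact hI.1 i (Finset.mem_sdiff.mp hi).1 j (Finset.mem_sdiff.mp hj).1
  calc (∑ t : Finset V, ∑ I : Finset V,
      (if (∀ i ∈ I, ∀ j ∈ I, ¬ G.Adj i j) ∧ t ⊆ I then
        d ^ t.card * z ^ (I \ t).card else 0))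
      ≤ ∑ t : Finset V, d ^ t.card * hcZ G z := Finset.sum_le_sum fun t _ => inner t
    _ = (∑ t : Finset V, d ^ t.card) * hcZ G z := by rw [Finset.sum_mul]
    _ = (1 + d) ^ Fintype.card V * hcZ G z := by
        rw [← Finset.powerset_univ, sum_pow_card', add_comm d 1, Finset.card_univ]

lemma hcZ_sub_le {V W : Type*} [Fintype V] [Fintype W] (G : SimpleGraph V)
    (GS : SimpleGraph W) (f : W → V) (hf : Function.Injective f)
    (hGS : ∀ a b : W, GS.Adj a b ↔ G.Adj (f a) (f b))
    {z : ℝ} (hz : 0 ≤ z) : hcZ GS z ≤ hcZ G z := by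
  unfold hcZ
  have key : ∀ S : Finset W,
      (if ∀ i ∈ S, ∀ j ∈ S, ¬ GS.Adj i j then z ^ S.card else 0)
      = (if ∀ i ∈ S.image f, ∀ j ∈ S.image f, ¬ G.Adj i j then z ^ (S.image f).card else 0) := by
    intro S
    have hcond : (∀ i ∈ S, ∀ j ∈ S, ¬ GS.Adj i j)
        ↔ (∀ i ∈ S.image f, ∀ j ∈ S.image f, ¬ G.Adj i j) := by
      constructor
      · intro h i hi j hj
        obtain ⟨a, ha, rfl⟩ := Finset.mem_image.mp hi
        obtain ⟨b, hb, rfl⟩ := Finset.mem_image.mp hj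
        intro hadj
        exact h a ha b hb ((hGS a b).mpr hadj)
      · intro h a ha b hb hadj
        exact h (f a) (Finset.mem_image_of_mem f ha) (f b) (Finset.mem_image_of_mem f hb)
          ((hGS a b).mp hadj)
    rw [Finset.card_image_of_injective _ hf]
    by_cases h : ∀ i ∈ S, ∀ j ∈ S, ¬ GS.Adj i j
    · rw [if_pos h, if_pos (hcond.mp h)]
    · rw [if_neg h, if_neg (fun hh => h (hcond.mpr hh))]
  rw [Finset.sum_congr rfl (fun S _ => key S)]
  have hinj : ∀ S ∈ (Finset.univ : Finset (Finset W)), ∀ S' ∈ Finset.univ,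
      S.image f = S'.image f → S = S' := by
    intro S _ S' _ h
    exact Finset.image_injective hf h
  rw [← Finset.sum_image (f := fun I : Finset V =>
      if ∀ i ∈ I, ∀ j ∈ I, ¬ G.Adj i j then z ^ I.card else 0) hinj]
  refine Finset.sum_le_sum_of_subset_of_nonneg (Finset.subset_univ _) fun I _ _ => ?_
  split
  · positivity
  · exact le_refl 0

lemma pair_sum_eq {V W : Type*} [Fintype V] [Fintype W] (G' : SimpleGraph V) (z : ℝ) :
    (∑ q : Finset W × Finset V, z ^ q.1.card *
      (if ∀ i ∈ q.2, ∀ j ∈ q.2, ¬ G'.Adj i j then z ^ q.2.card else 0))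
    = (1 + z) ^ (Fintype.card W) * hcZ G' z := by
  rw [Fintype.sum_prod_type, hcZ]
  calc (∑ A : Finset W, ∑ B : Finset V, z ^ A.card *
        (if ∀ i ∈ B, ∀ j ∈ B, ¬ G'.Adj i j then z ^ B.card else 0))
      = ∑ A : Finset W, z ^ A.card * ∑ B : Finset V,
          (if ∀ i ∈ B, ∀ j ∈ B, ¬ G'.Adj i j then z ^ B.card else 0) := by
        refine Finset.sum_congr rfl fun A _ => ?_
        rw [Finset.mul_sum]
    _ = (∑ A : Finset W, z ^ A.card) * ∑ B : Finset V,
          (if ∀ i ∈ B, ∀ j ∈ B, ¬ G'.Adj i j then z ^ B.card else 0) := by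
        rw [Finset.sum_mul]
    _ = (1 + z) ^ (Fintype.card W) * ∑ B : Finset V,
          (if ∀ i ∈ B, ∀ j ∈ B, ¬ G'.Adj i j then z ^ B.card else 0) := by
        rw [← Finset.powerset_univ, sum_pow_card', Finset.card_univ, add_comm z 1]

lemma hcZ_le_split {V A B : Type*} [Fintype V] [Fintype A] [Fintype B]
    (G : SimpleGraph V) (GS : SimpleGraph B) (f : A → V) (g : B → V)
    (hf : Function.Injective f) (hg : Function.Injective g)
    (hcover : ∀ v : V, (∃ a, f a = v) ∨ ∃ b, g b = v)
    (hdisj : ∀ a b, f a ≠ g b)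
    (hGS : ∀ a b : B, GS.Adj a b ↔ G.Adj (g a) (g b))
    {z : ℝ} (hz : 0 ≤ z) :
    hcZ G z ≤ (1 + z) ^ (Fintype.card A) * hcZ GS z := by
  set H : Finset A × Finset B → ℝ := fun q =>
    z ^ q.1.card * (if ∀ i ∈ q.2, ∀ j ∈ q.2, ¬ GS.Adj i j then z ^ q.2.card else 0)
    with hHdef
  set Φ : Finset V → Finset A × Finset B := fun I =>
    (Finset.univ.filter (fun a => f a ∈ I), Finset.univ.filter (fun b => g b ∈ I)) with hΦ
  have hHnn : ∀ q, 0 ≤ H q := by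
    intro q
    refine mul_nonneg (pow_nonneg hz _) ?_
    split
    · positivity
    · exact le_refl 0
  have hcard : ∀ I : Finset V, (Φ I).1.card + (Φ I).2.card = I.card := by
    intro I
    have h1 : (Φ I).1.card = (I.filter (fun v => ∃ a, f a = v)).card := by
      rw [← Finset.card_image_of_injective _ hf]
      congr 1
      ext v
      simp only [hΦ, Finset.mem_image, Finset.mem_filter, Finset.mem_univ, true_and]
      constructor
      · rintro ⟨a, ha, rfl⟩; exact ⟨ha, a, rfl⟩
      · rintro ⟨hv, a, rfl⟩; exact ⟨a, hv, rfl⟩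
    have h2 : (Φ I).2.card = (I.filter (fun v => ¬ ∃ a, f a = v)).card := by
      rw [← Finset.card_image_of_injective _ hg]
      congr 1
      ext v
      simp only [hΦ, Finset.mem_image, Finset.mem_filter, Finset.mem_univ, true_and]
      constructor
      · rintro ⟨b, hb, rfl⟩
        refine ⟨hb, ?_⟩
        rintro ⟨a, ha⟩
        exact hdisj a b ha
      · rintro ⟨hv, hno⟩
        rcases hcover v with ⟨a, ha⟩ | ⟨b, hb⟩
        · exact absurd ⟨a, ha⟩ hno
        · exact ⟨b, hb ▸ hv, hb⟩
    rw [h1, h2]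
    exact Finset.card_filter_add_card_filter_not _
  have hterm : ∀ I : Finset V,
      (if ∀ i ∈ I, ∀ j ∈ I, ¬ G.Adj i j then z ^ I.card else 0) ≤ H (Φ I) := by
    intro I
    by_cases hind : ∀ i ∈ I, ∀ j ∈ I, ¬ G.Adj i j
    · rw [if_pos hind, hHdef]
      have c2 : ∀ i ∈ (Φ I).2, ∀ j ∈ (Φ I).2, ¬ GS.Adj i j := by
        intro i hi j hj
        rw [hGS]
        have hi' : g i ∈ I := (Finset.mem_filter.mp hi).2
        have hj' : g j ∈ I := (Finset.mem_filter.mp hj).2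
        exact hind _ hi' _ hj'
      simp only [if_pos c2]
      rw [← pow_add, hcard I]
    · rw [if_neg hind]
      exact hHnn _
  have hinj : ∀ I ∈ (Finset.univ : Finset (Finset V)), ∀ I' ∈ Finset.univ,
      Φ I = Φ I' → I = I' := by
    intro I _ I' _ h
    rw [hΦ] at h
    simp only [Prod.mk.injEq] at h
    ext v
    rcases hcover v with ⟨a, rfl⟩ | ⟨b, rfl⟩
    · constructor
      · intro hvI
        have h1 : a ∈ Finset.univ.filter (fun a => f a ∈ I) := by simp [hvI]
        rw [h.1] at h1
        exact (Finset.mem_filter.mp h1).2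
      · intro hvI
        have h1 : a ∈ Finset.univ.filter (fun a => f a ∈ I') := by simp [hvI]
        rw [← h.1] at h1
        exact (Finset.mem_filter.mp h1).2
    · constructor
      · intro hvI
        have h1 : b ∈ Finset.univ.filter (fun b => g b ∈ I) := by simp [hvI]
        rw [h.2] at h1
        exact (Finset.mem_filter.mp h1).2
      · intro hvI
        have h1 : b ∈ Finset.univ.filter (fun b => g b ∈ I') := by simp [hvI]
        rw [← h.2] at h1
        exact (Finset.mem_filter.mp h1).2
  have step1 : hcZ G z ≤ ∑ q : Finset A × Finset B, H q := by
    rw [hcZ]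
    calc (∑ I : Finset V, if ∀ i ∈ I, ∀ j ∈ I, ¬ G.Adj i j then z ^ I.card else 0)
        ≤ ∑ I : Finset V, H (Φ I) := Finset.sum_le_sum fun I _ => hterm I
      _ = ∑ q ∈ Finset.univ.image Φ, H q := (Finset.sum_image (f := H) hinj).symm
      _ ≤ ∑ q : Finset A × Finset B, H q :=
          Finset.sum_le_sum_of_subset_of_nonneg (Finset.subset_univ _) fun q _ _ => hHnn q
  refine step1.trans (le_of_eq ?_)
  simp only [hHdef]
  exact pair_sum_eq GS z

open Classical in
/-- Let `G` be a graph on `[n]` in which the first `k` vertices form an independent set, and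
let `G'` be the induced subgraph on the remaining `n−k` vertices. For activities
`λ(n) = λVol/n` and `λ(n−k) = λVol/(n−k)`, if `k ≤ εn/(40 λVol + ε)` then
`e^{−ε/40} Z_{G'}(λ(n−k)) ≤ Z_G(λ(n)) ≤ e^{ε/40} Z_{G'}(λ(n−k))`. -/
theorem hcZ_remove_independent_prefix {n k : ℕ} (G : SimpleGraph (Fin n))
    (hindep : ∀ i j : Fin n, (i : ℕ) < k → (j : ℕ) < k → ¬ G.Adj i j)
    (lam Vol ε : ℝ) (hlam : 0 ≤ lam) (hVol : 0 ≤ Vol) (hε : 0 < ε)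
    (hk : (k : ℝ) ≤ ε * n / (40 * (lam * Vol) + ε)) :
    Real.exp (-(ε / 40)) *
        hcZ (G.comap (Subtype.val : {v : Fin n // k ≤ (v : ℕ)} → Fin n))
          (lam * Vol / ((n : ℝ) - (k : ℝ)))
      ≤ hcZ G (lam * Vol / n) ∧
    hcZ G (lam * Vol / n)
      ≤ Real.exp (ε / 40) *
          hcZ (G.comap (Subtype.val : {v : Fin n // k ≤ (v : ℕ)} → Fin n))
            (lam * Vol / ((n : ℝ) - (k : ℝ))) := by
  set L := lam * Vol with hLdef
  have hL : 0 ≤ L := mul_nonneg hlam hVol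
  set G' := G.comap (Subtype.val : {v : Fin n // k ≤ (v : ℕ)} → Fin n) with hG'def
  have e1 : Real.exp (-(ε / 40)) ≤ 1 := Real.exp_le_one_iff.mpr (by linarith)
  have e2 : 1 ≤ Real.exp (ε / 40) := by
    have := Real.add_one_le_exp (ε / 40)
    linarith
  -- trivial case helper
  have trivial_case : ∀ z1 z2 : ℝ, z1 = 0 → z2 = 0 →
      (Real.exp (-(ε / 40)) * hcZ G' z2 ≤ hcZ G z1 ∧
        hcZ G z1 ≤ Real.exp (ε / 40) * hcZ G' z2) := by
    intro z1 z2 h1 h2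
    rw [h1, h2, hcZ_zero, hcZ_zero]
    constructor
    · linarith
    · linarith
  rcases Nat.eq_zero_or_pos n with hn0 | hnpos
  · subst hn0
    have hk0 : k = 0 := by
      have : (k : ℝ) ≤ 0 := by simpa using hk
      exact_mod_cast le_antisymm (by exact_mod_cast this) (Nat.zero_le k)
    subst hk0
    exact trivial_case _ _ (by norm_num) (by norm_num)
  rcases eq_or_lt_of_le hL with hL0 | hLpos
  · exact trivial_case _ _ (by rw [← hL0, zero_div]) (by rw [← hL0, zero_div])
  -- main case : 0 < L, 0 < n
  have hnR : (0 : ℝ) < n := by exact_mod_cast hnpos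
  have hden : (0 : ℝ) < 40 * L + ε := by linarith
  have hkB : (k : ℝ) * (40 * L + ε) ≤ ε * n := by
    calc (k : ℝ) * (40 * L + ε) ≤ (ε * n / (40 * L + ε)) * (40 * L + ε) :=
          mul_le_mul_of_nonneg_right hk (le_of_lt hden)
      _ = ε * n := by field_simp
  have hkn : (k : ℝ) < n := by nlinarith
  have hnk : (0 : ℝ) < (n : ℝ) - k := by linarith
  set z1 := L / (n : ℝ) with hz1def
  set z2 := L / ((n : ℝ) - k) with hz2def
  have hz1 : 0 ≤ z1 := div_nonneg hL (le_of_lt hnR)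
  have hz2 : 0 ≤ z2 := div_nonneg hL (le_of_lt hnk)
  have hz12 : z1 ≤ z2 := by
    rw [hz1def, hz2def, div_le_div_iff₀ hnR hnk]
    nlinarith
  set d := z2 - z1 with hddef
  have hd : 0 ≤ d := by linarith
  have hz2k : z2 * k ≤ ε / 40 := by
    rw [hz2def, div_mul_eq_mul_div, div_le_div_iff₀ hnk (by norm_num : (0:ℝ) < 40)]
    nlinarith
  have hdn : d * n ≤ ε / 40 := by
    have heq : d * n = z2 * k := by
      rw [hddef, hz1def, hz2def]
      field_simp
      ring
    rw [heq]
    exact hz2k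
  have hZ'z1 : 0 ≤ hcZ G' z1 := hcZ_nonneg _ hz1
  have hZ'z2 : 0 ≤ hcZ G' z2 := hcZ_nonneg _ hz2
  have hZz1 : 0 ≤ hcZ G z1 := hcZ_nonneg _ hz1
  -- subgraph inequality
  have hsub : hcZ G' z1 ≤ hcZ G z1 :=
    hcZ_sub_le G G' (Subtype.val) Subtype.val_injective (fun a b => Iff.rfl) hz1
  -- upper bound
  have hupper : hcZ G z1 ≤ Real.exp (ε / 40) * hcZ G' z2 := by
    have hmono : hcZ G z1 ≤ hcZ G z2 := hcZ_mono G hz1 hz12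
    have hsplit : hcZ G z2 ≤
        (1 + z2) ^ (Fintype.card {v : Fin n // (v : ℕ) < k}) * hcZ G' z2 := by
      refine hcZ_le_split G G'
        (Subtype.val : {v : Fin n // (v : ℕ) < k} → Fin n)
        (Subtype.val : {v : Fin n // k ≤ (v : ℕ)} → Fin n)
        Subtype.val_injective Subtype.val_injective ?_ ?_ (fun a b => Iff.rfl) hz2
      · intro v
        rcases lt_or_ge (v : ℕ) k with h | h
        · exact Or.inl ⟨⟨v, h⟩, rfl⟩
        · exact Or.inr ⟨⟨v, h⟩, rfl⟩
      · intro a b hab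
        have h1 : ((a : Fin n) : ℕ) < k := a.2
        have h2 : k ≤ ((b : Fin n) : ℕ) := b.2
        rw [hab] at h1
        omega
    have hcardA : Fintype.card {v : Fin n // (v : ℕ) < k} ≤ k := by
      rw [Fintype.card_subtype]
      have := Finset.card_le_card_of_injOn (f := fun v : Fin n => (v : ℕ))
        (t := Finset.range k) (s := Finset.univ.filter (fun v : Fin n => (v : ℕ) < k))
        (by intro v hv
            have hv := Finset.mem_filter.mp (Finset.mem_coe.mp hv)
            exact Finset.mem_range.mpr hv.2)
        (by intro a _ b _ hab; exact Fin.val_injective hab)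
      simpa using this
    have hpow : (1 + z2) ^ (Fintype.card {v : Fin n // (v : ℕ) < k})
        ≤ Real.exp (ε / 40) := by
      calc (1 + z2) ^ (Fintype.card {v : Fin n // (v : ℕ) < k})
          ≤ (1 + z2) ^ k := pow_le_pow_right₀ (by linarith) hcardA
        _ ≤ (Real.exp z2) ^ k := by
            refine pow_le_pow_left₀ (by linarith) ?_ k
            have := Real.add_one_le_exp z2
            linarith
        _ = Real.exp (z2 * k) := by
            rw [← Real.exp_nat_mul]
            ring_nf
        _ ≤ Real.exp (ε / 40) := Real.exp_le_exp.mpr hz2k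
    calc hcZ G z1 ≤ hcZ G z2 := hmono
      _ ≤ (1 + z2) ^ (Fintype.card {v : Fin n // (v : ℕ) < k}) * hcZ G' z2 := hsplit
      _ ≤ Real.exp (ε / 40) * hcZ G' z2 := mul_le_mul_of_nonneg_right hpow hZ'z2
  -- lower bound
  have hlower : hcZ G' z2 ≤ Real.exp (ε / 40) * hcZ G z1 := by
    have hz2eq : z2 = z1 + d := by rw [hddef]; ring
    have hadd : hcZ G' z2 ≤
        (1 + d) ^ (Fintype.card {v : Fin n // k ≤ (v : ℕ)}) * hcZ G' z1 := by
      rw [hz2eq]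
      exact hcZ_add_le G' hz1 hd
    have hcardB : Fintype.card {v : Fin n // k ≤ (v : ℕ)} ≤ n := by
      have := Fintype.card_subtype_le (fun v : Fin n => k ≤ (v : ℕ))
      simpa using this
    have hpow : (1 + d) ^ (Fintype.card {v : Fin n // k ≤ (v : ℕ)})
        ≤ Real.exp (ε / 40) := by
      calc (1 + d) ^ (Fintype.card {v : Fin n // k ≤ (v : ℕ)})
          ≤ (1 + d) ^ n := pow_le_pow_right₀ (by linarith) hcardB
        _ ≤ (Real.exp d) ^ n := by
            refine pow_le_pow_left₀ (by linarith) ?_ n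
            have := Real.add_one_le_exp d
            linarith
        _ = Real.exp (d * n) := by
            rw [← Real.exp_nat_mul]
            ring_nf
        _ ≤ Real.exp (ε / 40) := Real.exp_le_exp.mpr hdn
    calc hcZ G' z2
        ≤ (1 + d) ^ (Fintype.card {v : Fin n // k ≤ (v : ℕ)}) * hcZ G' z1 := hadd
      _ ≤ Real.exp (ε / 40) * hcZ G' z1 := mul_le_mul_of_nonneg_right hpow hZ'z1
      _ ≤ Real.exp (ε / 40) * hcZ G z1 :=
          mul_le_mul_of_nonneg_left hsub (le_of_lt (Real.exp_pos _))
  constructor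
  · have := mul_le_mul_of_nonneg_left hlower (le_of_lt (Real.exp_pos (-(ε / 40))))
    calc Real.exp (-(ε / 40)) * hcZ G' z2
        ≤ Real.exp (-(ε / 40)) * (Real.exp (ε / 40) * hcZ G z1) := this
      _ = hcZ G z1 := by
          rw [← mul_assoc, ← Real.exp_add]
          simp
  · exact hupper.trans (le_refl _)
end
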